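/- arXiv:1402.3277 — 5 statements merged into one kernel-verified Lean document; each statement's English description precedes it below -/
import Mathlib

section
/- Let A be a finite alphabet. For every word u ∈ A⁺ and every integer k > 0, we have u^{2^k} ≡_k u^{2^k+1}. -/
open Pointwise

namespace FOSep

/-- First-order formulas over alphabet `A`, with variables indexed by `ℕ`:
atomic formulas are `a(x)` for letters `a` and `x < y`; connectives are
negation, conjunction and existential quantification. -/
inductive Form (A : Type) : Type
  | letter : A → ℕ → Form A
  | lt : ℕ → ℕ → Form A
  | not : Form A → Form A
  | and : Form A → Form A → Form A
  | ex : ℕ → Form A → Form A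

namespace Form

/-- Quantifier rank: maximal nesting depth of quantifiers. -/
def rank {A : Type} : Form A → ℕ
  | letter _ _ => 0
  | lt _ _ => 0
  | not φ => rank φ
  | and φ ψ => max (rank φ) (rank ψ)
  | ex _ φ => rank φ + 1

/-- Free variables of a formula. -/
def freeVars {A : Type} : Form A → Finset ℕ
  | letter _ i => {i}
  | lt i j => {i, j}
  | not φ => freeVars φ
  | and φ ψ => freeVars φ ∪ freeVars ψ
  | ex n φ => freeVars φ \ {n}

end Form

/-- A sentence is a formula without free variables. -/
def IsSentence {A : Type} (φ : Form A) : Prop := φ.freeVars = ∅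

/-- Satisfaction of a formula in a finite word (a list of letters, whose
positions are ordered by `<`), under an assignment of variables to positions. -/
def Interp {A : Type} (w : List A) : Form A → (ℕ → Fin w.length) → Prop
  | .letter a i, v => w.get (v i) = a
  | .lt i j, v => (v i : ℕ) < (v j : ℕ)
  | .not φ, v => ¬ Interp w φ v
  | .and φ ψ, v => Interp w φ v ∧ Interp w ψ v
  | .ex n φ, v => ∃ p : Fin w.length, Interp w φ (Function.update v n p)

/-- The underlying (nonempty) list of letters of a nonempty word. -/
def wordList {A : Type} (w : FreeSemigroup A) : List A := w.head :: w.tail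

/-- A nonempty word satisfies a formula if every assignment satisfies it;
for sentences this is the usual notion of satisfaction. -/
def Models {A : Type} (w : FreeSemigroup A) (φ : Form A) : Prop :=
  ∀ v : ℕ → Fin (wordList w).length, Interp (wordList w) φ v

/-- The language of words of `A⁺` satisfying `φ`. -/
def LangOf {A : Type} (φ : Form A) : Set (FreeSemigroup A) := { w | Models w φ }

/-- A language `L ⊆ A⁺` is FO-definable if it is the language of some sentence. -/
def FODefinable {A : Type} (L : Set (FreeSemigroup A)) : Prop :=
  ∃ φ : Form A, IsSentence φ ∧ L = LangOf φ

/-- `w ≡_k w'`: the two words satisfy the same sentences of quantifier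
rank at most `k`. -/
def EquivK {A : Type} (k : ℕ) (w w' : FreeSemigroup A) : Prop :=
  ∀ φ : Form A, IsSentence φ → φ.rank ≤ k → (Models w φ ↔ Models w' φ)

/-- A finite partition of `X`: finitely many blocks, and every element lies
in exactly one block. -/
def FinPart {X : Type} (P : Set (Set X)) : Prop :=
  P.Finite ∧ ∀ x : X, ∃! B, B ∈ P ∧ x ∈ B

/-- An FO-partition: a finite partition all of whose blocks are FO-definable. -/
def FOPart {A : Type} (P : Set (Set (FreeSemigroup A))) : Prop :=
  FinPart P ∧ ∀ B ∈ P, FODefinable B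

/-- `K` separates `L₀` from `L₁`. -/
def Separates {X : Type} (K L₀ L₁ : Set X) : Prop :=
  L₀ ⊆ K ∧ K ∩ L₁ = ∅

/-- `L₀` and `L₁` are separable by an FO-definable language. -/
def FOSeparable {A : Type} (L₀ L₁ : Set (FreeSemigroup A)) : Prop :=
  ∃ K : Set (FreeSemigroup A), FODefinable K ∧ Separates K L₀ L₁

/-- The imprint of a finite partition `P` on a morphism `α`:
the sets `T ⊆ S` contained in the image of some block. -/
def imprint {A S : Type} [Semigroup S] (α : FreeSemigroup A →ₙ* S)
    (P : Set (Set (FreeSemigroup A))) : Set (Set S) :=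
  { T | ∃ K ∈ P, T ⊆ ⇑α '' K }

/-- The optimal FO-imprint of `α`: the intersection of the imprints of all
FO-partitions. -/
def optImprintFO {A S : Type} [Semigroup S] (α : FreeSemigroup A →ₙ* S) :
    Set (Set S) :=
  { T | ∀ P : Set (Set (FreeSemigroup A)), FOPart P → T ∈ imprint α P }

/-- Powers in a semigroup: `spow x n = x^(n+1)`. -/
def spow {M : Type} [Semigroup M] (x : M) : ℕ → M
  | 0 => x
  | n + 1 => spow x n * x

/-- `X ⊆ 2^S` contains `𝕊` and is closed under downset, products, and the
FO-operation `T ↦ T^ω ∪ T^(ω+1)` (phrased via idempotent powers: in a finite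
semigroup, `T^ω` is the unique idempotent power of `T`). -/
def SatClosed {S : Type} [Semigroup S] (𝕊 X : Set (Set S)) : Prop :=
  𝕊 ⊆ X ∧
  (∀ T ∈ X, ∀ T' : Set S, T' ⊆ T → T' ∈ X) ∧
  (∀ T ∈ X, ∀ T' ∈ X, T * T' ∈ X) ∧
  (∀ T ∈ X, ∀ n : ℕ, spow T n * spow T n = spow T n →
      spow T n ∪ spow T n * T ∈ X)

/-- `Sat 𝕊`: the smallest subset of `2^S` containing `𝕊` that is closed under
downset, products and the FO-operation. -/
def Sat {S : Type} [Semigroup S] (𝕊 : Set (Set S)) : Set (Set S) :=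
  ⋂₀ { X | SatClosed 𝕊 X }

/-- `Sat α = Sat({{α(w)} | w ∈ A⁺})`. -/
def SatM {A S : Type} [Semigroup S] (α : FreeSemigroup A →ₙ* S) : Set (Set S) :=
  Sat { T | ∃ w : FreeSemigroup A, T = {α w} }

/-- Left quotient `w⁻¹L`. -/
def QuotL {A : Type} (w : FreeSemigroup A) (L : Set (FreeSemigroup A)) :
    Set (FreeSemigroup A) := { u | w * u ∈ L }

/-- Right quotient `Lw⁻¹`. -/
def QuotR {A : Type} (w : FreeSemigroup A) (L : Set (FreeSemigroup A)) :
    Set (FreeSemigroup A) := { u | u * w ∈ L }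

/-- A language is regular if it is recognized by a morphism into a finite
semigroup. -/
def Regular {A : Type} (L : Set (FreeSemigroup A)) : Prop :=
  ∃ (S : Type) (_ : Semigroup S) (_ : Fintype S)
    (β : FreeSemigroup A →ₙ* S) (F : Set S), L = ⇑β ⁻¹' F

/-- A class of languages that is nonempty, closed under Boolean operations and
under left/right quotients by words, and contains only regular languages. -/
def GoodClass {A : Type} (C : Set (Set (FreeSemigroup A))) : Prop :=
  C.Nonempty ∧
  (∀ L ∈ C, ∀ L' ∈ C, L ∪ L' ∈ C) ∧
  (∀ L ∈ C, ∀ L' ∈ C, L ∩ L' ∈ C) ∧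
  (∀ L ∈ C, Lᶜ ∈ C) ∧
  (∀ L ∈ C, ∀ w : FreeSemigroup A, QuotL w L ∈ C ∧ QuotR w L ∈ C) ∧
  (∀ L ∈ C, Regular L)

/-- A C-partition: a finite partition all of whose blocks belong to `C`. -/
def CPart {A : Type} (C : Set (Set (FreeSemigroup A)))
    (P : Set (Set (FreeSemigroup A))) : Prop :=
  FinPart P ∧ ∀ B ∈ P, B ∈ C

/-- The optimal imprint with respect to a class `C`: the intersection of the
imprints of all C-partitions. -/
def optImprint {A S : Type} [Semigroup S] (C : Set (Set (FreeSemigroup A)))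
    (α : FreeSemigroup A →ₙ* S) : Set (Set S) :=
  { T | ∀ P : Set (Set (FreeSemigroup A)), CPart C P → T ∈ imprint α P }

/-- A subset of a semigroup that is a subsemigroup and a group under the
induced product. -/
def IsGroupSet {M : Type} [Semigroup M] (G : Set M) : Prop :=
  (∀ x ∈ G, ∀ y ∈ G, x * y ∈ G) ∧
  ∃ e ∈ G, (∀ x ∈ G, e * x = x ∧ x * e = x) ∧
    ∀ x ∈ G, ∃ y ∈ G, x * y = e ∧ y * x = e

/-- Aperiodicity: `s^ω = s^(ω+1)` for every `s` (phrased via idempotent powers). -/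
def Aperiodic (S : Type) [Semigroup S] : Prop :=
  ∀ s : S, ∀ n : ℕ, spow s n * spow s n = spow s n → spow s n = spow s n * s

/-- Green's `H`-equivalence relative to a subsemigroup `X` of `M`
(with witnesses taken in `X`). -/
def HEquivIn {M : Type} [Semigroup M] (X : Set M) (s s' : M) : Prop :=
  s = s' ∨ ((∃ t ∈ X, s * t = s') ∧ (∃ t ∈ X, s' * t = s) ∧
            (∃ t ∈ X, t * s = s') ∧ (∃ t ∈ X, t * s' = s))

/-- `H` is an `H`-class of the semigroup `X`. -/
def IsHClassIn {M : Type} [Semigroup M] (X : Set M) (H : Set M) : Prop :=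
  ∃ s ∈ X, H = { s' ∈ X | HEquivIn X s s' }

/-- Closure conditions for `Sat_G`. -/
def SatGClosed {S : Type} [Semigroup S] (𝕊 X : Set (Set S)) : Prop :=
  𝕊 ⊆ X ∧
  (∀ T ∈ X, ∀ T' : Set S, T' ⊆ T → T' ∈ X) ∧
  (∀ T ∈ X, ∀ T' ∈ X, T * T' ∈ X) ∧
  (∀ 𝔾 : Set (Set S), 𝔾 ⊆ X → IsGroupSet 𝔾 → ⋃₀ 𝔾 ∈ X)

/-- `Sat_G 𝕊`: the smallest subset of `2^S` containing `𝕊` closed under downset,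
products, and unions of groups. -/
def SatG {S : Type} [Semigroup S] (𝕊 : Set (Set S)) : Set (Set S) :=
  ⋂₀ { X | SatGClosed 𝕊 X }

/-- Closure conditions for `Sat_H`. -/
def SatHClosed {S : Type} [Semigroup S] (𝕊 X : Set (Set S)) : Prop :=
  𝕊 ⊆ X ∧
  (∀ T ∈ X, ∀ T' : Set S, T' ⊆ T → T' ∈ X) ∧
  (∀ T ∈ X, ∀ T' ∈ X, T * T' ∈ X) ∧
  (∀ H : Set (Set S), IsHClassIn X H → ⋃₀ H ∈ X)

/-- `Sat_H 𝕊`: the smallest subset of `2^S` containing `𝕊` closed under downset,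
products, and unions of `H`-classes. -/
def SatH {S : Type} [Semigroup S] (𝕊 : Set (Set S)) : Set (Set S) :=
  ⋂₀ { X | SatHClosed 𝕊 X }

/-! ### Infinite words -/

/-- Satisfaction of a formula in an ω-word (a function `ℕ → A`), under an
assignment of variables to positions. -/
def InterpInf {A : Type} (w : ℕ → A) : Form A → (ℕ → ℕ) → Prop
  | .letter a i, v => w (v i) = a
  | .lt i j, v => v i < v j
  | .not φ, v => ¬ InterpInf w φ v
  | .and φ ψ, v => InterpInf w φ v ∧ InterpInf w ψ v
  | .ex n φ, v => ∃ p : ℕ, InterpInf w φ (Function.update v n p)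

/-- An ω-word satisfies a formula if every assignment satisfies it; for
sentences this is the usual notion of satisfaction. -/
def ModelsInf {A : Type} (w : ℕ → A) (φ : Form A) : Prop :=
  ∀ v : ℕ → ℕ, InterpInf w φ v

/-- The ω-language of ω-words satisfying `φ`. -/
def LangOfInf {A : Type} (φ : Form A) : Set (ℕ → A) := { w | ModelsInf w φ }

/-- An ω-language is FO-definable if it is the ω-language of some sentence. -/
def FODefinableInf {A : Type} (L : Set (ℕ → A)) : Prop :=
  ∃ φ : Form A, IsSentence φ ∧ L = LangOfInf φ

/-- `w ≡_k w'` for ω-words. -/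
def EquivKInf {A : Type} (k : ℕ) (w w' : ℕ → A) : Prop :=
  ∀ φ : Form A, IsSentence φ → φ.rank ≤ k → (ModelsInf w φ ↔ ModelsInf w' φ)

/-- An FO-partition of `A^∞`. -/
def FOPartInf {A : Type} (P : Set (Set (ℕ → A))) : Prop :=
  FinPart P ∧ ∀ B ∈ P, FODefinableInf B

/-- The imprint of a finite partition of `A^∞` on a map `α : A^∞ → Sinf`. -/
def imprintInf {A Sinf : Type} (α : (ℕ → A) → Sinf) (P : Set (Set (ℕ → A))) :
    Set (Set Sinf) :=
  { T | ∃ K ∈ P, T ⊆ α '' K }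

/-- A C-partition of `A^∞`. -/
def CPartInf {A : Type} (C : Set (Set (ℕ → A))) (P : Set (Set (ℕ → A))) : Prop :=
  FinPart P ∧ ∀ B ∈ P, B ∈ C

/-- The optimal imprint on `α : A^∞ → Sinf` with respect to a class `C` of
ω-languages. -/
def optImprintInf {A Sinf : Type} (C : Set (Set (ℕ → A))) (α : (ℕ → A) → Sinf) :
    Set (Set Sinf) :=
  { T | ∀ P : Set (Set (ℕ → A)), CPartInf C P → T ∈ imprintInf α P }

/-- The optimal FO-imprint on `α : A^∞ → Sinf`. -/
def optImprintFOInf {A Sinf : Type} (α : (ℕ → A) → Sinf) : Set (Set Sinf) :=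
  { T | ∀ P : Set (Set (ℕ → A)), FOPartInf P → T ∈ imprintInf α P }

/-- Concatenation of a finite word and an ω-word. -/
def catInf {A : Type} (u : FreeSemigroup A) (x : ℕ → A) : ℕ → A :=
  fun n =>
    if h : n < (wordList u).length then (wordList u).get ⟨n, h⟩
    else x (n - (wordList u).length)



def agree0 {A : Type} (w w' : List A) (v v' : ℕ → Option ℕ) : Prop :=
  (∀ i p, v i = some p → p < w.length) ∧
  (∀ i p, v' i = some p → p < w'.length) ∧
  (∀ i, v i = none ↔ v' i = none) ∧
  (∀ i j p q p' q', v i = some p → v j = some q → v' i = some p' → v' j = some q' →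
    (p < q ↔ p' < q')) ∧
  (∀ i p p', v i = some p → v' i = some p' → w[p]? = w'[p']?)

def Agree {A : Type} : ℕ → List A → List A → (ℕ → Option ℕ) → (ℕ → Option ℕ) → Prop
  | 0, w, w', v, v' => agree0 w w' v v'
  | k+1, w, w', v, v' => agree0 w w' v v' ∧
      (∀ n, Agree k w w' (Function.update v n none) (Function.update v' n none)) ∧
      (∀ n p, p < w.length → ∃ p', p' < w'.length ∧
        Agree k w w' (Function.update v n (some p)) (Function.update v' n (some p'))) ∧
      (∀ n p', p' < w'.length → ∃ p, p < w.length ∧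
        Agree k w w' (Function.update v n (some p)) (Function.update v' n (some p')))

lemma Agree.toAgree0 {A : Type} {k : ℕ} {w w' : List A} {v v'} (h : Agree k w w' v v') :
    agree0 w w' v v' := by cases k with
  | zero => exact h
  | succ k => exact h.1

lemma agree0_symm {A : Type} {w w' : List A} {v v'} (h : agree0 w w' v v') :
    agree0 w' w v' v := by
  obtain ⟨b1, b2, hn, ho, hl⟩ := h
  exact ⟨b2, b1, fun i => (hn i).symm,
    fun i j p q p' q' h1 h2 h3 h4 => (ho i j p' q' p q h3 h4 h1 h2).symm,
    fun i p p' h1 h2 => (hl i p' p h2 h1).symm⟩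

lemma Agree.symm {A : Type} {k : ℕ} {w w' : List A} {v v'} (h : Agree k w w' v v') :
    Agree k w' w v' v := by
  induction k generalizing v v' with
  | zero => exact agree0_symm h
  | succ k ih =>
    obtain ⟨h0, he, hf, hb⟩ := h
    exact ⟨agree0_symm h0, fun n => ih (he n),
      fun n p hp => let ⟨p', hp', hA⟩ := hb n p hp; ⟨p', hp', ih hA⟩,
      fun n p' hp' => let ⟨p, hp, hA⟩ := hf n p' hp'; ⟨p, hp, ih hA⟩⟩

lemma Agree.mono {A : Type} {k : ℕ} {w w' : List A} {v v'} (h : Agree (k+1) w w' v v') :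
    Agree k w w' v v' := by
  induction k generalizing v v' with
  | zero => exact h.1
  | succ k ih =>
    obtain ⟨h0, he, hf, hb⟩ := h
    exact ⟨h0, fun n => ih (he n),
      fun n p hp => let ⟨p', hp', hA⟩ := hf n p hp; ⟨p', hp', ih hA⟩,
      fun n p' hp' => let ⟨p, hp, hA⟩ := hb n p' hp'; ⟨p, hp, ih hA⟩⟩

lemma agree0_refl {A : Type} {w : List A} {v : ℕ → Option ℕ}
    (hb : ∀ i p, v i = some p → p < w.length) : agree0 w w v v := by
  refine ⟨hb, hb, fun _ => Iff.rfl, fun i j p q p' q' h1 h2 h3 h4 => ?_,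
    fun i p p' h1 h2 => ?_⟩
  · rw [h1] at h3; rw [h2] at h4; cases h3; cases h4; rfl
  · rw [h1] at h2; cases h2; rfl

lemma Agree.refl {A : Type} {k : ℕ} {w : List A} {v : ℕ → Option ℕ}
    (hb : ∀ i p, v i = some p → p < w.length) : Agree k w w v v := by
  induction k generalizing v with
  | zero => exact agree0_refl hb
  | succ k ih =>
    refine ⟨agree0_refl hb, fun n => ih ?_, fun n p hp => ⟨p, hp, ih ?_⟩,
      fun n p hp => ⟨p, hp, ih ?_⟩⟩
    all_goals intro i p' hi
    all_goals rcases eq_or_ne i n with rfl | hne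
    · simp [Function.update] at hi
    · simp [Function.update, hne] at hi; exact hb i p' hi
    · simp [Function.update] at hi; omega
    · simp [Function.update, hne] at hi; exact hb i p' hi
    · simp [Function.update] at hi; omega
    · simp [Function.update, hne] at hi; exact hb i p' hi

def glue (c : ℕ) (va vb : ℕ → Option ℕ) : ℕ → Option ℕ :=
  fun i => match va i with
  | some q => some q
  | none => (vb i).map (fun t => c + t)

lemma glue_update_left (c : ℕ) (va vb : ℕ → Option ℕ) (n p : ℕ) :
    Function.update (glue c va vb) n (some p) =
      glue c (Function.update va n (some p)) vb := by
  funext i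
  rcases eq_or_ne i n with rfl | hne
  · simp [glue, Function.update]
  · simp [glue, Function.update, hne]

lemma glue_update_right (c : ℕ) (va vb : ℕ → Option ℕ) (n p : ℕ) (hp : c ≤ p) :
    Function.update (glue c va vb) n (some p) =
      glue c (Function.update va n none) (Function.update vb n (some (p - c))) := by
  funext i
  rcases eq_or_ne i n with rfl | hne
  · simp [glue, Function.update]; omega
  · simp [glue, Function.update, hne]

lemma glue_update_none (c : ℕ) (va vb : ℕ → Option ℕ) (n : ℕ) :
    Function.update (glue c va vb) n none =
      glue c (Function.update va n none) (Function.update vb n none) := by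
  funext i
  rcases eq_or_ne i n with rfl | hne
  · simp [glue, Function.update]
  · simp [glue, Function.update, hne]

lemma agree0_glue {A : Type} {w1 w2 w1' w2' : List A} {va vb va' vb'}
    (h1 : agree0 w1 w1' va va') (h2 : agree0 w2 w2' vb vb') :
    agree0 (w1 ++ w2) (w1' ++ w2') (glue w1.length va vb) (glue w1'.length va' vb') := by
  obtain ⟨a1, a2, an, ao, al⟩ := h1
  obtain ⟨b1, b2, bn, bo, bl⟩ := h2
  have hval : ∀ i p, glue w1.length va vb i = some p →
      (va i = some p ∧ p < w1.length) ∨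
      (∃ t, vb i = some t ∧ p = w1.length + t ∧ t < w2.length ∧ va i = none) := by
    intro i p hp
    rcases hva : va i with _ | q
    · simp [glue, hva] at hp
      rcases hvb : vb i with _ | t
      · simp [hvb] at hp
      · simp [hvb] at hp
        exact Or.inr ⟨t, rfl, hp.symm, b1 i t hvb, rfl⟩
    · simp [glue, hva] at hp
      exact Or.inl ⟨hp ▸ rfl, hp ▸ a1 i q hva⟩
  have hval' : ∀ i p, glue w1'.length va' vb' i = some p →
      (va' i = some p ∧ p < w1'.length) ∨
      (∃ t, vb' i = some t ∧ p = w1'.length + t ∧ t < w2'.length ∧ va' i = none) := by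
    intro i p hp
    rcases hva : va' i with _ | q
    · simp [glue, hva] at hp
      rcases hvb : vb' i with _ | t
      · simp [hvb] at hp
      · simp [hvb] at hp
        exact Or.inr ⟨t, rfl, hp.symm, b2 i t hvb, rfl⟩
    · simp [glue, hva] at hp
      exact Or.inl ⟨hp ▸ rfl, hp ▸ a2 i q hva⟩
  refine ⟨?_, ?_, ?_, ?_, ?_⟩
  · intro i p hp
    rcases hval i p hp with ⟨_, h⟩ | ⟨t, _, rfl, ht, _⟩ <;> simp <;> omega
  · intro i p hp
    rcases hval' i p hp with ⟨_, h⟩ | ⟨t, _, rfl, ht, _⟩ <;> simp <;> omega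
  · intro i
    constructor <;> intro h
    · rcases hva : va i with _ | q
      · rcases hvb : vb i with _ | t
        · simp [glue, (an i).1 hva, Option.map, (bn i).1 hvb]
        · simp [glue, hva, hvb] at h
      · simp [glue, hva] at h
    · rcases hva : va' i with _ | q
      · rcases hvb : vb' i with _ | t
        · simp [glue, (an i).2 hva, Option.map, (bn i).2 hvb]
        · simp [glue, hva, hvb] at h
      · simp [glue, hva] at h
  · intro i j p q p' q' h1 h2 h3 h4
    rcases hval i p h1 with ⟨hip, hplt⟩ | ⟨t, hit, rfl, htlt, hinone⟩ <;>
      rcases hval j q h2 with ⟨hjq, hqlt⟩ | ⟨s, hjs, rfl, hslt, hjnone⟩ <;>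
      rcases hval' i p' h3 with ⟨hip', hplt'⟩ | ⟨t', hit', rfl, htlt', hinone'⟩ <;>
      rcases hval' j q' h4 with ⟨hjq', hqlt'⟩ | ⟨s', hjs', rfl, hslt', hjnone'⟩
    · exact ao i j p q p' q' hip hjq hip' hjq'
    -- impossible mixed cases and cross cases
    all_goals try (exfalso; first
      | (rw [(an i).2 hinone'] at hip; cases hip)
      | (rw [(an j).2 hjnone'] at hjq; cases hjq)
      | (rw [(an i).1 hinone] at hip'; cases hip')
      | (rw [(an j).1 hjnone] at hjq'; cases hjq'))
    · constructor <;> intro <;> omega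
    · constructor <;> intro <;> omega
    · have := bo i j t s t' s' hit hjs hit' hjs'
      constructor <;> intro <;> omega
  · intro i p p' h1 h2
    rcases hval i p h1 with ⟨hip, hplt⟩ | ⟨t, hit, rfl, htlt, hinone⟩ <;>
      rcases hval' i p' h2 with ⟨hip', hplt'⟩ | ⟨t', hit', rfl, htlt', hinone'⟩
    · rw [List.getElem?_append_left hplt, List.getElem?_append_left hplt']
      exact al i p p' hip hip'
    · rw [(an i).2 hinone'] at hip; cases hip
    · rw [(an i).1 hinone] at hip'; cases hip'
    · rw [List.getElem?_append_right (by omega), List.getElem?_append_right (by omega)]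
      simp only [Nat.add_sub_cancel_left]
      exact bl i t t' hit hit'

lemma Agree.comp {A : Type} {k : ℕ} {w1 w2 w1' w2' : List A} {va vb va' vb'}
    (h1 : Agree k w1 w1' va va') (h2 : Agree k w2 w2' vb vb') :
    Agree k (w1 ++ w2) (w1' ++ w2') (glue w1.length va vb) (glue w1'.length va' vb') := by
  induction k generalizing va vb va' vb' with
  | zero => exact agree0_glue h1 h2
  | succ k ih =>
    obtain ⟨a0, ae, af, ab⟩ := h1
    obtain ⟨b0, be, bf, bb⟩ := h2
    refine ⟨agree0_glue a0 b0, ?_, ?_, ?_⟩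
    · intro n
      rw [glue_update_none, glue_update_none]
      exact ih (ae n) (be n)
    · intro n p hp
      by_cases hpc : p < w1.length
      · obtain ⟨p', hp', hA⟩ := af n p hpc
        refine ⟨p', by simp; omega, ?_⟩
        rw [glue_update_left, glue_update_left]
        exact ih hA ((Agree.mono ⟨b0, be, bf, bb⟩))
      · simp only [List.length_append] at hp
        obtain ⟨t', ht', hA⟩ := bf n (p - w1.length) (by omega)
        refine ⟨w1'.length + t', by simp; omega, ?_⟩
        rw [glue_update_right _ _ _ _ _ (by omega),
            glue_update_right _ _ _ _ _ (by omega)]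
        simp only [Nat.add_sub_cancel_left]
        exact ih (ae n) hA
    · intro n p' hp'
      by_cases hpc : p' < w1'.length
      · obtain ⟨p, hp, hA⟩ := ab n p' hpc
        refine ⟨p, by simp; omega, ?_⟩
        rw [glue_update_left, glue_update_left]
        exact ih hA ((Agree.mono ⟨b0, be, bf, bb⟩))
      · simp only [List.length_append] at hp'
        obtain ⟨t, ht, hA⟩ := bb n (p' - w1'.length) (by omega)
        refine ⟨w1.length + t, by simp; omega, ?_⟩
        rw [glue_update_right _ _ _ _ _ (by omega),
            glue_update_right _ _ _ _ _ (by omega)]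
        simp only [Nat.add_sub_cancel_left]
        exact ih (ae n) hA

def lpow {A : Type} (U : List A) : ℕ → List A
  | 0 => []
  | m + 1 => U ++ lpow U m

lemma lpow_length {A : Type} (U : List A) (m : ℕ) : (lpow U m).length = m * U.length := by
  induction m with
  | zero => simp [lpow]
  | succ m ih => simp [lpow, ih]; ring

lemma lpow_add {A : Type} (U : List A) (a b : ℕ) :
    lpow U (a + b) = lpow U a ++ lpow U b := by
  induction a with
  | zero => simp [lpow]
  | succ a ih => rw [Nat.succ_add]; simp [lpow, ih]

def restrictL (c : ℕ) (v : ℕ → Option ℕ) : ℕ → Option ℕ :=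
  fun i => (v i).bind fun q => if q < c then some q else none

def restrictR (c : ℕ) (v : ℕ → Option ℕ) : ℕ → Option ℕ :=
  fun i => (v i).bind fun q => if q < c then none else some (q - c)

lemma glue_restrict (c : ℕ) (v : ℕ → Option ℕ) :
    glue c (restrictL c v) (restrictR c v) = v := by
  funext i
  rcases hv : v i with _ | q
  · simp [glue, restrictL, restrictR, hv]
  · by_cases hq : q < c
    · simp [glue, restrictL, restrictR, hv, hq]
    · simp [glue, restrictL, restrictR, hv, hq]
      omega

def PinOK {A : Type} (x y : List A) (L L' : ℕ) (v v' : ℕ → Option ℕ) : Prop :=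
  ∀ i, (v i = none ∧ v' i = none) ∨
    (∃ p, p < x.length ∧ v i = some p ∧ v' i = some p) ∨
    (∃ d, d < y.length ∧ v i = some (L - 1 - d) ∧ v' i = some (L' - 1 - d))

lemma agree0_of_pinOK {A : Type} {x y U : List A} {M N : ℕ} {v v' : ℕ → Option ℕ}
    (h : PinOK x y (x ++ (lpow U M ++ y)).length (x ++ (lpow U N ++ y)).length v v') :
    agree0 (x ++ (lpow U M ++ y)) (x ++ (lpow U N ++ y)) v v' := by
  set W := x ++ (lpow U M ++ y) with hW
  set W' := x ++ (lpow U N ++ y) with hW'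
  have hL : W.length = x.length + (M * U.length + y.length) := by
    simp [hW, lpow_length]
  have hL' : W'.length = x.length + (N * U.length + y.length) := by
    simp [hW', lpow_length]
  have hsome : ∀ i p p', v i = some p → v' i = some p' →
      (p < x.length ∧ p' = p) ∨
      (∃ d, d < y.length ∧ p = W.length - 1 - d ∧ p' = W'.length - 1 - d) := by
    intro i p p' hp hp'
    rcases h i with ⟨h1, _⟩ | ⟨q, hq, h1, h2⟩ | ⟨d, hd, h1, h2⟩
    · rw [h1] at hp; cases hp
    · rw [h1] at hp; cases hp; rw [h2] at hp'; cases hp'; exact Or.inl ⟨hq, rfl⟩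
    · rw [h1] at hp; cases hp; rw [h2] at hp'; cases hp'
      exact Or.inr ⟨d, hd, rfl, rfl⟩
  refine ⟨?_, ?_, ?_, ?_, ?_⟩
  · intro i p hp
    rcases h i with ⟨h1, _⟩ | ⟨q, hq, h1, _⟩ | ⟨d, hd, h1, _⟩ <;> rw [h1] at hp
    · cases hp
    · cases hp; omega
    · cases hp; omega
  · intro i p hp
    rcases h i with ⟨_, h1⟩ | ⟨q, hq, _, h1⟩ | ⟨d, hd, _, h1⟩ <;> rw [h1] at hp
    · cases hp
    · cases hp; omega
    · cases hp; omega
  · intro i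
    rcases h i with ⟨h1, h2⟩ | ⟨q, hq, h1, h2⟩ | ⟨d, hd, h1, h2⟩ <;> rw [h1, h2] <;> simp
  · intro i j p q p' q' hp hq hp' hq'
    rcases hsome i p p' hp hp' with ⟨hpx, rfl⟩ | ⟨d, hd, rfl, rfl⟩ <;>
      rcases hsome j q q' hq hq' with ⟨hqx, rfl⟩ | ⟨e, he, rfl, rfl⟩ <;>
      constructor <;> intro <;> omega
  · intro i p p' hp hp'
    rcases hsome i p p' hp hp' with ⟨hpx, rfl⟩ | ⟨d, hd, rfl, rfl⟩
    · rw [List.getElem?_append_left hpx, List.getElem?_append_left hpx]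
    · have hWa : W = (x ++ lpow U M) ++ y := by simp [hW]
      have hWa' : W' = (x ++ lpow U N) ++ y := by simp [hW']
      rw [hWa, hWa']
      have e1 : (x ++ lpow U M ++ y).length - 1 - d
          = (x ++ lpow U M).length + (y.length - 1 - d) := by
        simp [lpow_length]; omega
      have e2 : (x ++ lpow U N ++ y).length - 1 - d
          = (x ++ lpow U N).length + (y.length - 1 - d) := by
        simp [lpow_length]; omega
      rw [e1, e2, List.getElem?_append_right (Nat.le_add_right _ _),
        List.getElem?_append_right (Nat.le_add_right _ _)]
      simp

lemma split_agree {A : Type} {k : ℕ} {W1 W2 W1' W2' : List A} {v v' : ℕ → Option ℕ}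
    (h1 : Agree k W1 W1' (restrictL W1.length v) (restrictL W1'.length v'))
    (h2 : Agree k W2 W2' (restrictR W1.length v) (restrictR W1'.length v')) :
    Agree k (W1 ++ W2) (W1' ++ W2') v v' := by
  have := Agree.comp h1 h2
  rwa [glue_restrict, glue_restrict] at this

lemma restrictL_bound (c : ℕ) (v : ℕ → Option ℕ) :
    ∀ i p, restrictL c v i = some p → p < c := by
  intro i p hp
  rcases hv : v i with _ | q
  · simp [restrictL, hv] at hp
  · simp [restrictL, hv] at hp
    omega

lemma restrictL_update_self (c : ℕ) (v : ℕ → Option ℕ) (n p : ℕ) (h : p < c) :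
    restrictL c (Function.update v n (some p)) n = some p := by
  simp [restrictL, Function.update, h]

lemma restrictL_update_ne (c : ℕ) (v : ℕ → Option ℕ) (n p i : ℕ) (h : i ≠ n) :
    restrictL c (Function.update v n (some p)) i = restrictL c v i := by
  simp [restrictL, Function.update, h]

lemma restrictR_update_self (c : ℕ) (v : ℕ → Option ℕ) (n p : ℕ) (h : p < c) :
    restrictR c (Function.update v n (some p)) n = none := by
  simp [restrictR, Function.update, h]

lemma restrictR_update_ne (c : ℕ) (v : ℕ → Option ℕ) (n p i : ℕ) (h : i ≠ n) :
    restrictR c (Function.update v n (some p)) i = restrictR c v i := by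
  simp [restrictR, Function.update, h]

lemma middle_assoc {A : Type} (x a T D b y : List A) :
    x ++ ((a ++ (T ++ D ++ b)) ++ y) = (x ++ (a ++ T)) ++ (D ++ (b ++ y)) := by
  simp [List.append_assoc]

lemma claim_forth {A : Type} {U : List A} (hU : 0 < U.length) {k : ℕ}
    (IH : ∀ (x y : List A) (M N : ℕ) (v v' : ℕ → Option ℕ),
      (M = N ∨ (2^k - 1 ≤ M ∧ 2^k - 1 ≤ N)) →
      PinOK x y (x ++ (lpow U M ++ y)).length (x ++ (lpow U N ++ y)).length v v' →
      Agree k (x ++ (lpow U M ++ y)) (x ++ (lpow U N ++ y)) v v')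
    (x y : List A) (M N : ℕ) (v v' : ℕ → Option ℕ)
    (hMN : M = N ∨ (2^(k+1) - 1 ≤ M ∧ 2^(k+1) - 1 ≤ N))
    (hpin : PinOK x y (x ++ (lpow U M ++ y)).length (x ++ (lpow U N ++ y)).length v v')
    (n p : ℕ) (hp : p < (x ++ (lpow U M ++ y)).length) :
    ∃ p', p' < (x ++ (lpow U N ++ y)).length ∧
      Agree k (x ++ (lpow U M ++ y)) (x ++ (lpow U N ++ y))
        (Function.update v n (some p)) (Function.update v' n (some p')) := by
  have hcond : M = N ∨ (2^k - 1 ≤ M ∧ 2^k - 1 ≤ N) := by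
    rcases hMN with h | h
    · exact Or.inl h
    · right; have h1 : 1 ≤ 2^k := Nat.one_le_two_pow
      have h2 : (2:ℕ)^(k+1) = 2 * 2^k := by ring
      omega
  have hLW : (x ++ (lpow U M ++ y)).length
      = x.length + (lpow U M).length + y.length := by simp; omega
  have hLW' : (x ++ (lpow U N ++ y)).length
      = x.length + (lpow U N).length + y.length := by simp; omega
  rcases lt_or_ge p x.length with hpx | hpge
  · -- Case A : p in the prefix x
    refine ⟨p, by omega, ?_⟩
    set c := p + 1 with hc
    have h1len : (x.take c).length = c := by rw [List.length_take]; omega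
    have hW : x ++ (lpow U M ++ y) = x.take c ++ (x.drop c ++ (lpow U M ++ y)) := by
      conv_lhs => rw [← List.take_append_drop c x]
      rw [List.append_assoc]
    have hW' : x ++ (lpow U N ++ y) = x.take c ++ (x.drop c ++ (lpow U N ++ y)) := by
      conv_lhs => rw [← List.take_append_drop c x]
      rw [List.append_assoc]
    rw [hW, hW']
    apply split_agree
    · rw [h1len]
      have heq : restrictL c (Function.update v n (some p))
          = restrictL c (Function.update v' n (some p)) := by
        funext i
        rcases eq_or_ne i n with rfl | hne
        · rw [restrictL_update_self _ _ _ _ (by omega),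
            restrictL_update_self _ _ _ _ (by omega)]
        · rw [restrictL_update_ne _ _ _ _ _ hne, restrictL_update_ne _ _ _ _ _ hne]
          rcases hpin i with ⟨h1, h2⟩ | ⟨qq, hq, h1, h2⟩ | ⟨d, hd, h1, h2⟩ <;>
            simp only [restrictL, h1, h2, Option.bind]
          rw [if_neg (by omega), if_neg (by omega)]
      rw [heq]
      exact Agree.refl (fun i q0 h => by
        have := restrictL_bound c _ i q0 h; omega)
    · rw [h1len]
      apply IH (x.drop c) y M N _ _ hcond
      intro i
      rcases eq_or_ne i n with rfl | hne
      · rw [restrictR_update_self _ _ _ _ (by omega),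
          restrictR_update_self _ _ _ _ (by omega)]
        exact Or.inl ⟨rfl, rfl⟩
      · rw [restrictR_update_ne _ _ _ _ _ hne, restrictR_update_ne _ _ _ _ _ hne]
        rcases hpin i with ⟨h1, h2⟩ | ⟨qq, hq, h1, h2⟩ | ⟨d, hd, h1, h2⟩
        · exact Or.inl (by simp [restrictR, h1, h2])
        · by_cases hqc : qq < c
          · exact Or.inl (by simp [restrictR, h1, h2, hqc])
          · refine Or.inr (Or.inl ⟨qq - c, by rw [List.length_drop]; omega, ?_, ?_⟩) <;>
              simp [restrictR, h1, h2, hqc]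
        · refine Or.inr (Or.inr ⟨d, hd, ?_, ?_⟩) <;>
            simp only [restrictR, h1, h2, Option.bind] <;>
            rw [if_neg (by omega)] <;> (congr 1; simp; omega)
  · rcases lt_or_ge p (x.length + (lpow U M).length) with hpm | hpy
    · -- Case B : p in the middle power
      set nU := U.length with hnU
      set m := p - x.length with hm
      set q := m / nU with hqdef
      set r := m % nU with hrdef
      have hr : r < nU := Nat.mod_lt _ hU
      have hLq : (lpow U q).length = q * nU := lpow_length U q
      have hqm : (lpow U q).length + r = m := by
        rw [hLq, hqdef, hrdef, Nat.mul_comm]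
        exact Nat.div_add_mod m nU
      have hqM : q < M := by
        rw [hqdef, Nat.div_lt_iff_lt_mul hU, ← lpow_length U M]
        omega
      obtain ⟨q', hq'N, hcondL, hcondR⟩ : ∃ q', q' < N ∧
          (q = q' ∨ (2^k - 1 ≤ q ∧ 2^k - 1 ≤ q')) ∧
          (M - 1 - q = N - 1 - q' ∨ (2^k - 1 ≤ M - 1 - q ∧ 2^k - 1 ≤ N - 1 - q')) := by
        have h1 : 1 ≤ 2^k := Nat.one_le_two_pow
        have h2 : (2:ℕ)^(k+1) = 2 * 2^k := by ring
        rcases hMN with rfl | ⟨hM, hN⟩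
        · exact ⟨q, hqM, Or.inl rfl, Or.inl rfl⟩
        · by_cases hql : q ≤ 2^k - 1
          · exact ⟨q, by omega, Or.inl rfl, Or.inr ⟨by omega, by omega⟩⟩
          · by_cases hqr2 : M - 1 - q ≤ 2^k - 1
            · exact ⟨N - 1 - (M - 1 - q), by omega, Or.inr ⟨by omega, by omega⟩,
                Or.inl (by omega)⟩
            · exact ⟨2^k - 1, by omega, Or.inr ⟨by omega, by omega⟩,
                Or.inr ⟨by omega, by omega⟩⟩
      have hUsplit : lpow U M = lpow U q ++ (U ++ lpow U (M - 1 - q)) := by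
        have hMeq : M = q + (1 + (M - 1 - q)) := by omega
        conv_lhs => rw [hMeq]
        rw [lpow_add U q, lpow_add U 1]
        simp [lpow]
      have hUsplit' : lpow U N = lpow U q' ++ (U ++ lpow U (N - 1 - q')) := by
        have hNeq : N = q' + (1 + (N - 1 - q')) := by omega
        conv_lhs => rw [hNeq]
        rw [lpow_add U q', lpow_add U 1]
        simp [lpow]
      have hLM2 : (lpow U M).length
          = (lpow U q).length + nU + (lpow U (M - 1 - q)).length := by
        rw [hUsplit]; simp; omega
      have hLN2 : (lpow U N).length
          = (lpow U q').length + nU + (lpow U (N - 1 - q')).length := by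
        rw [hUsplit']; simp; omega
      set p' := x.length + (lpow U q').length + r with hp'def
      have hq'm : (lpow U q').length = q' * nU := lpow_length U q'
      refine ⟨p', by omega, ?_⟩
      set c := p + 1 with hc
      set c' := p' + 1 with hc'
      have htake : (U.take (r+1)).length = r + 1 := by
        rw [List.length_take]; omega
      have hW : x ++ (lpow U M ++ y)
          = (x ++ (lpow U q ++ U.take (r+1)))
            ++ (U.drop (r+1) ++ (lpow U (M - 1 - q) ++ y)) := by
        have h0 := middle_assoc x (lpow U q) (U.take (r+1)) (U.drop (r+1))
          (lpow U (M - 1 - q)) y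
        rw [List.take_append_drop] at h0
        rw [hUsplit]
        exact h0
      have hW' : x ++ (lpow U N ++ y)
          = (x ++ (lpow U q' ++ U.take (r+1)))
            ++ (U.drop (r+1) ++ (lpow U (N - 1 - q') ++ y)) := by
        have h0 := middle_assoc x (lpow U q') (U.take (r+1)) (U.drop (r+1))
          (lpow U (N - 1 - q')) y
        rw [List.take_append_drop] at h0
        rw [hUsplit']
        exact h0
      have h1len : (x ++ (lpow U q ++ U.take (r+1))).length = c := by
        simp [htake]; omega
      have h1len' : (x ++ (lpow U q' ++ U.take (r+1))).length = c' := by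
        simp [htake]; omega
      rw [hW, hW']
      apply split_agree
      · rw [h1len, h1len']
        apply IH x (U.take (r+1)) q q' _ _ hcondL
        intro i
        rcases eq_or_ne i n with rfl | hne
        · refine Or.inr (Or.inr ⟨0, by omega, ?_, ?_⟩)
          · rw [restrictL_update_self _ _ _ _ (by omega), h1len]
            congr 1
          · rw [restrictL_update_self _ _ _ _ (by omega), h1len']
            congr 1
        · rw [restrictL_update_ne _ _ _ _ _ hne, restrictL_update_ne _ _ _ _ _ hne]
          rcases hpin i with ⟨h1, h2⟩ | ⟨qq, hq, h1, h2⟩ | ⟨d, hd, h1, h2⟩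
          · exact Or.inl (by simp [restrictL, h1, h2])
          · refine Or.inr (Or.inl ⟨qq, hq, ?_, ?_⟩) <;>
              simp only [restrictL, h1, h2, Option.bind] <;>
              rw [if_pos (by omega)]
          · refine Or.inl ⟨?_, ?_⟩ <;>
              simp only [restrictL, h1, h2, Option.bind] <;>
              rw [if_neg (by omega)]
      · rw [h1len, h1len']
        apply IH (U.drop (r+1)) y (M - 1 - q) (N - 1 - q') _ _ hcondR
        intro i
        rcases eq_or_ne i n with rfl | hne
        · rw [restrictR_update_self _ _ _ _ (by omega),
            restrictR_update_self _ _ _ _ (by omega)]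
          exact Or.inl ⟨rfl, rfl⟩
        · rw [restrictR_update_ne _ _ _ _ _ hne, restrictR_update_ne _ _ _ _ _ hne]
          rcases hpin i with ⟨h1, h2⟩ | ⟨qq, hq, h1, h2⟩ | ⟨d, hd, h1, h2⟩
          · exact Or.inl (by simp [restrictR, h1, h2])
          · refine Or.inl ⟨?_, ?_⟩ <;>
              simp only [restrictR, h1, h2, Option.bind] <;>
              rw [if_pos (by omega)]
          · refine Or.inr (Or.inr ⟨d, hd, ?_, ?_⟩) <;>
              simp only [restrictR, h1, h2, Option.bind] <;>
              (rw [if_neg (by omega)]; congr 1; simp [List.length_drop]; omega)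
    · -- Case C : p in the suffix y
      have hylen : 0 < y.length := by omega
      set j := p - (x.length + (lpow U M).length) with hj
      have hjy : j < y.length := by omega
      set d := y.length - 1 - j with hd0
      set p' := x.length + (lpow U N).length + j with hp'def
      refine ⟨p', by omega, ?_⟩
      set c := p + 1 with hc
      set c' := p' + 1 with hc'
      have hyt : (y.take (j+1)).length = j + 1 := by rw [List.length_take]; omega
      have hW : x ++ (lpow U M ++ y)
          = (x ++ (lpow U M ++ y.take (j+1))) ++ y.drop (j+1) := by
        conv_lhs => rw [← List.take_append_drop (j+1) y]
        simp [List.append_assoc]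
      have hW' : x ++ (lpow U N ++ y)
          = (x ++ (lpow U N ++ y.take (j+1))) ++ y.drop (j+1) := by
        conv_lhs => rw [← List.take_append_drop (j+1) y]
        simp [List.append_assoc]
      have h1len : (x ++ (lpow U M ++ y.take (j+1))).length = c := by
        simp [hyt]; omega
      have h1len' : (x ++ (lpow U N ++ y.take (j+1))).length = c' := by
        simp [hyt]; omega
      rw [hW, hW']
      apply split_agree
      · rw [h1len, h1len']
        apply IH x (y.take (j+1)) M N _ _ hcond
        intro i
        rcases eq_or_ne i n with rfl | hne
        · refine Or.inr (Or.inr ⟨0, by omega, ?_, ?_⟩)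
          · rw [restrictL_update_self _ _ _ _ (by omega), h1len]
            congr 1
          · rw [restrictL_update_self _ _ _ _ (by omega), h1len']
            congr 1
        · rw [restrictL_update_ne _ _ _ _ _ hne, restrictL_update_ne _ _ _ _ _ hne]
          rcases hpin i with ⟨h1, h2⟩ | ⟨qq, hq, h1, h2⟩ | ⟨d2, hd2, h1, h2⟩
          · exact Or.inl (by simp [restrictL, h1, h2])
          · refine Or.inr (Or.inl ⟨qq, hq, ?_, ?_⟩) <;>
              simp only [restrictL, h1, h2, Option.bind] <;>
              rw [if_pos (by omega)]
          · by_cases hdd : d ≤ d2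
            · refine Or.inr (Or.inr ⟨d2 - d, by omega, ?_, ?_⟩)
              · simp only [restrictL, h1, Option.bind]
                rw [if_pos (by omega), h1len]
                congr 1
                omega
              · simp only [restrictL, h2, Option.bind]
                rw [if_pos (by omega), h1len']
                congr 1
                omega
            · refine Or.inl ⟨?_, ?_⟩ <;>
                simp only [restrictL, h1, h2, Option.bind] <;>
                rw [if_neg (by omega)]
      · rw [h1len, h1len']
        have heq : restrictR c (Function.update v n (some p))
            = restrictR c' (Function.update v' n (some p')) := by
          funext i
          rcases eq_or_ne i n with rfl | hne
          · rw [restrictR_update_self _ _ _ _ (by omega),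
              restrictR_update_self _ _ _ _ (by omega)]
          · rw [restrictR_update_ne _ _ _ _ _ hne, restrictR_update_ne _ _ _ _ _ hne]
            rcases hpin i with ⟨h1, h2⟩ | ⟨qq, hq, h1, h2⟩ | ⟨d2, hd2, h1, h2⟩
            · simp [restrictR, h1, h2]
            · simp only [restrictR, h1, h2, Option.bind]
              rw [if_pos (by omega), if_pos (by omega)]
            · by_cases hdd : d ≤ d2
              · simp only [restrictR, h1, h2, Option.bind]
                rw [if_pos (by omega), if_pos (by omega)]
              · simp only [restrictR, h1, h2, Option.bind]
                rw [if_neg (by omega), if_neg (by omega)]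
                congr 1
                omega
        rw [heq]
        refine Agree.refl (fun i q0 h => ?_)
        rcases hrb : (Function.update v' n (some p')) i with _ | V
        · simp [restrictR, hrb] at h
        · simp only [restrictR, hrb, Option.bind] at h
          have hVlt : V < (x ++ (lpow U N ++ y)).length := by
            rcases eq_or_ne i n with rfl | hne
            · rw [Function.update_self] at hrb
              cases hrb; omega
            · rw [Function.update_of_ne hne] at hrb
              rcases hpin i with ⟨_, h2⟩ | ⟨qq, hq, _, h2⟩ | ⟨d2, hd2, _, h2⟩ <;>
                rw [h2] at hrb <;> cases hrb
              · omega
              · omega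
          split at h
          · cases h
          · cases h
            rw [List.length_drop]
            omega

lemma pinOK_symm {A : Type} {x y : List A} {L L' : ℕ} {v v' : ℕ → Option ℕ}
    (h : PinOK x y L L' v v') : PinOK x y L' L v' v := by
  intro i
  rcases h i with ⟨h1, h2⟩ | ⟨q, hq, h1, h2⟩ | ⟨d, hd, h1, h2⟩
  · exact Or.inl ⟨h2, h1⟩
  · exact Or.inr (Or.inl ⟨q, hq, h2, h1⟩)
  · exact Or.inr (Or.inr ⟨d, hd, h2, h1⟩)

lemma claim {A : Type} {U : List A} (hU : 0 < U.length) :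
    ∀ (k : ℕ) (x y : List A) (M N : ℕ) (v v' : ℕ → Option ℕ),
      (M = N ∨ (2^k - 1 ≤ M ∧ 2^k - 1 ≤ N)) →
      PinOK x y (x ++ (lpow U M ++ y)).length (x ++ (lpow U N ++ y)).length v v' →
      Agree k (x ++ (lpow U M ++ y)) (x ++ (lpow U N ++ y)) v v' := by
  intro k
  induction k with
  | zero => exact fun x y M N v v' hMN hpin => agree0_of_pinOK hpin
  | succ k ih =>
    intro x y M N v v' hMN hpin
    have hcond : M = N ∨ (2^k - 1 ≤ M ∧ 2^k - 1 ≤ N) := by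
      rcases hMN with h | h
      · exact Or.inl h
      · right
        have h1 : 1 ≤ 2^k := Nat.one_le_two_pow
        have h2 : (2:ℕ)^(k+1) = 2 * 2^k := by ring
        omega
    refine ⟨agree0_of_pinOK hpin, ?_, ?_, ?_⟩
    · intro n
      apply ih x y M N _ _ hcond
      intro i
      rcases eq_or_ne i n with rfl | hne
      · rw [Function.update_self, Function.update_self]
        exact Or.inl ⟨rfl, rfl⟩
      · rw [Function.update_of_ne hne, Function.update_of_ne hne]
        exact hpin i
    · exact claim_forth hU ih x y M N v v' hMN hpin
    · intro n p' hp'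
      have hMN' : N = M ∨ (2^(k+1) - 1 ≤ N ∧ 2^(k+1) - 1 ≤ M) := by tauto
      obtain ⟨pp, hpp, hA⟩ := claim_forth hU ih x y N M v' v hMN' (pinOK_symm hpin) n p' hp'
      exact ⟨pp, hpp, hA.symm⟩

lemma transfer {A : Type} (φ : Form A) :
    ∀ (k : ℕ), φ.rank ≤ k → ∀ (l l' : List A) (v v' : ℕ → Option ℕ),
      Agree k l l' v v' →
      ∀ (vf : ℕ → Fin l.length) (vf' : ℕ → Fin l'.length),
      (∀ i ∈ φ.freeVars, v i = some (vf i : ℕ) ∧ v' i = some (vf' i : ℕ)) →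
      (Interp l φ vf ↔ Interp l' φ vf') := by
  induction φ with
  | letter a i =>
    intro k hk l l' v v' hA vf vf' hfree
    obtain ⟨hv, hv'⟩ := hfree i (by simp [Form.freeVars])
    obtain ⟨_, _, _, _, hlet⟩ := hA.toAgree0
    have h := hlet i _ _ hv hv'
    rw [List.getElem?_eq_getElem (vf i).isLt, List.getElem?_eq_getElem (vf' i).isLt] at h
    simp only [Interp, List.get_eq_getElem]
    rw [Option.some_inj] at h
    rw [h]
  | lt i j =>
    intro k hk l l' v v' hA vf vf' hfree
    obtain ⟨hvi, hvi'⟩ := hfree i (by simp [Form.freeVars])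
    obtain ⟨hvj, hvj'⟩ := hfree j (by simp [Form.freeVars])
    obtain ⟨_, _, _, hord, _⟩ := hA.toAgree0
    simpa only [Interp] using hord i j _ _ _ _ hvi hvj hvi' hvj'
  | not ψ ih =>
    intro k hk l l' v v' hA vf vf' hfree
    simp only [Interp]
    exact not_congr (ih k hk l l' v v' hA vf vf' hfree)
  | and ψ χ ihψ ihχ =>
    intro k hk l l' v v' hA vf vf' hfree
    have hkψ : ψ.rank ≤ k := le_trans (le_max_left _ _) hk
    have hkχ : χ.rank ≤ k := le_trans (le_max_right _ _) hk
    simp only [Interp]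
    exact and_congr
      (ihψ k hkψ l l' v v' hA vf vf' (fun i hi => hfree i (by
        simp [Form.freeVars]; exact Or.inl hi)))
      (ihχ k hkχ l l' v v' hA vf vf' (fun i hi => hfree i (by
        simp [Form.freeVars]; exact Or.inr hi)))
  | ex n ψ ih =>
    intro k hk l l' v v' hA vf vf' hfree
    have hk1 : 1 ≤ k := le_trans (by simp [Form.rank]) hk
    obtain ⟨k', rfl⟩ : ∃ k', k = k' + 1 := ⟨k - 1, by omega⟩
    obtain ⟨h0, he, hf, hb⟩ := hA
    have hrψ : ψ.rank ≤ k' := by simp [Form.rank] at hk; omega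
    have hcond : ∀ (pf : Fin l.length) (pf' : Fin l'.length), ∀ i ∈ ψ.freeVars,
        Function.update v n (some (pf : ℕ)) i
          = some ((Function.update vf n pf i : Fin l.length) : ℕ) ∧
        Function.update v' n (some (pf' : ℕ)) i
          = some ((Function.update vf' n pf' i : Fin l'.length) : ℕ) := by
      intro pf pf' i hi
      rcases eq_or_ne i n with rfl | hne
      · simp [Function.update]
      · have hmem : i ∈ (Form.ex n ψ).freeVars := by
          simp [Form.freeVars]; exact ⟨hi, hne⟩
        obtain ⟨h1, h2⟩ := hfree i hmem
        simp [Function.update, hne, h1, h2]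
    simp only [Interp]
    constructor
    · rintro ⟨pf, hint⟩
      obtain ⟨p', hp', hA'⟩ := hf n (pf : ℕ) pf.isLt
      refine ⟨⟨p', hp'⟩, ?_⟩
      exact (ih k' hrψ l l' _ _ hA' (Function.update vf n pf)
        (Function.update vf' n ⟨p', hp'⟩) (hcond pf ⟨p', hp'⟩)).mp hint
    · rintro ⟨pf', hint⟩
      obtain ⟨p, hp, hA'⟩ := hb n (pf' : ℕ) pf'.isLt
      refine ⟨⟨p, hp⟩, ?_⟩
      exact (ih k' hrψ l l' _ _ hA' (Function.update vf n ⟨p, hp⟩)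
        (Function.update vf' n pf') (hcond ⟨p, hp⟩ pf')).mpr hint

lemma interp_congr {A : Type} (φ : Form A) :
    ∀ (l : List A) (vf vf' : ℕ → Fin l.length),
      (∀ i ∈ φ.freeVars, vf i = vf' i) → (Interp l φ vf ↔ Interp l φ vf') := by
  induction φ with
  | letter a i =>
    intro l vf vf' h
    simp only [Interp, h i (by simp [Form.freeVars])]
  | lt i j =>
    intro l vf vf' h
    simp only [Interp, h i (by simp [Form.freeVars]), h j (by simp [Form.freeVars])]
  | not ψ ih =>
    intro l vf vf' h
    simp only [Interp]
    exact not_congr (ih l vf vf' h)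
  | and ψ χ ihψ ihχ =>
    intro l vf vf' h
    simp only [Interp]
    exact and_congr
      (ihψ l vf vf' (fun i hi => h i (by simp [Form.freeVars]; exact Or.inl hi)))
      (ihχ l vf vf' (fun i hi => h i (by simp [Form.freeVars]; exact Or.inr hi)))
  | ex n ψ ih =>
    intro l vf vf' h
    simp only [Interp]
    apply exists_congr
    intro p
    apply ih
    intro i hi
    rcases eq_or_ne i n with rfl | hne
    · simp [Function.update]
    · have hmem : i ∈ (Form.ex n ψ).freeVars := by
        simp [Form.freeVars]; exact ⟨hi, hne⟩
      simp [Function.update, hne, h i hmem]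

lemma wordList_mul {A : Type} (u v : FreeSemigroup A) :
    wordList (u * v) = wordList u ++ wordList v := by
  simp [wordList, FreeSemigroup.head_mul, FreeSemigroup.tail_mul]

lemma lpow_succ_right {A : Type} (U : List A) (m : ℕ) :
    lpow U (m + 1) = lpow U m ++ U := by
  induction m with
  | zero => simp [lpow]
  | succ m ih =>
    show U ++ lpow U (m+1) = (U ++ lpow U m) ++ U
    rw [ih, List.append_assoc]

lemma wordList_spow {A : Type} (u : FreeSemigroup A) (m : ℕ) :
    wordList (spow u m) = lpow (wordList u) (m + 1) := by
  induction m with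
  | zero => simp [spow, lpow]
  | succ m ih =>
    show wordList (spow u m * u) = _
    rw [wordList_mul, ih, ← lpow_succ_right]

lemma models_iff_interp {A : Type} (w : FreeSemigroup A) (φ : Form A)
    (hs : IsSentence φ) (vf : ℕ → Fin (wordList w).length) :
    Models w φ ↔ Interp (wordList w) φ vf := by
  constructor
  · exact fun h => h vf
  · intro h v
    refine (interp_congr φ _ v vf ?_).mpr h
    intro i hi
    rw [hs] at hi
    exact absurd hi (Finset.notMem_empty i)

theorem stmt10 {A : Type} [Fintype A] (u : FreeSemigroup A) (k : ℕ)
    (hk : 0 < k) :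
    EquivK k (spow u (2 ^ k - 1)) (spow u (2 ^ k)) := by
  intro φ hs hr
  set U := wordList u with hUdef
  have hU : 0 < U.length := by simp [hUdef, wordList]
  have h2k : 1 ≤ 2^k := Nat.one_le_two_pow
  have hlist1 : wordList (spow u (2^k - 1)) = lpow U (2^k) := by
    rw [wordList_spow]; congr 1; omega
  have hlist2 : wordList (spow u (2^k)) = lpow U (2^k + 1) := wordList_spow u _
  have hAgree : Agree k (lpow U (2^k)) (lpow U (2^k + 1))
      (fun _ => none) (fun _ => none) := by
    have h := claim hU k [] [] (2^k) (2^k + 1) (fun _ => none) (fun _ => none)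
      (Or.inr ⟨by omega, by omega⟩) (fun i => Or.inl ⟨rfl, rfl⟩)
    simpa using h
  have hlen1 : 0 < (wordList (spow u (2^k - 1))).length := by simp [wordList]
  have hlen2 : 0 < (wordList (spow u (2^k))).length := by simp [wordList]
  rw [models_iff_interp _ φ hs (fun _ => ⟨0, hlen1⟩),
      models_iff_interp _ φ hs (fun _ => ⟨0, hlen2⟩)]
  apply transfer φ k hr _ _ (fun _ => none) (fun _ => none)
  · rw [hlist1, hlist2]; exact hAgree
  · intro i hi
    rw [hs] at hi
    exact absurd hi (Finset.notMem_empty i)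

end FOSep
end

section
/- Let S be a finite semigroup and let 𝕋 be a subsemigroup of 2^S that is a pseudo-group. Then there exists a subsemigroup 𝔾 ⊆ 𝕋 that is a group (under the product of 2^S) such that ∪𝔾 = ∪𝕋. -/
open Pointwise

namespace FOSep

namespace Stmt13Aux

private lemma finOpt {M : Type} [Finite M] : Finite (Option M) :=
  Finite.of_equiv _ (Equiv.optionEquivSumPUnit.{0,0} M).symm

/-- In a finite monoid, some positive power of every element is idempotent,
and we can take it ≥ 2. -/
lemma exists_idem_pow {N : Type} [Monoid N] [Finite N] (x : N) :
    ∃ n, 2 ≤ n ∧ x ^ n * x ^ n = x ^ n := by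
  obtain ⟨m, n, hmn, h⟩ : ∃ m n, m < n ∧ x ^ m = x ^ n := by
    obtain ⟨m, n, hne, h⟩ := Finite.exists_ne_map_eq_of_infinite (fun k : ℕ => x ^ k)
    rcases hne.lt_or_gt with h' | h'
    · exact ⟨m, n, h', h⟩
    · exact ⟨n, m, h', h.symm⟩
  set d := n - m with hd
  have hd1 : 0 < d := Nat.sub_pos_of_lt hmn
  have key : ∀ j, x ^ (m + j) = x ^ (m + j + d) := by
    intro j
    have hn : m + j + d = n + j := by omega
    rw [hn, pow_add, pow_add, h]
  have key2 : ∀ k j, x ^ (m + j) = x ^ (m + j + k * d) := by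
    intro k
    induction k with
    | zero => simp
    | succ k ih =>
      intro j
      have h1 := ih j
      have h2 := key (j + k * d)
      have e1 : m + (j + k * d) = m + j + k * d := by omega
      have e2 : m + j + k * d + d = m + j + (k + 1) * d := by ring
      rw [e1] at h2
      rw [e2] at h2
      rw [h1, h2]
  refine ⟨(m + 2) * d, ?_, ?_⟩
  · nlinarith
  · have hge : m ≤ (m + 2) * d := by nlinarith
    have e3 : (m + 2) * d + (m + 2) * d = m + ((m + 2) * d - m) + (m + 2) * d := by omega
    have e4 : m + ((m + 2) * d - m) = (m + 2) * d := by omega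
    calc x ^ ((m + 2) * d) * x ^ ((m + 2) * d) = x ^ ((m + 2) * d + (m + 2) * d) := by
            rw [pow_add]
      _ = x ^ (m + ((m + 2) * d - m) + ((m + 2) * d)) := by rw [e3]
      _ = x ^ (m + ((m + 2) * d - m)) := by
            have := key2 (m + 2) ((m + 2) * d - m)
            rw [← this]
      _ = x ^ ((m + 2) * d) := by rw [e4]

end Stmt13Aux

namespace Stmt13Aux

/-- In a finite semigroup `M`, any nonempty mul-closed `𝕋 ⊆ M` contains an
idempotent `E` such that every `z ∈ 𝕋` fixed by `E` on both sides has a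
two-sided inverse relative to `E` inside `𝕋`, itself fixed by `E`. -/
theorem main {M : Type} [Semigroup M] [Finite M] (𝕋 : Set M) (hne : 𝕋.Nonempty)
    (hmul : ∀ a ∈ 𝕋, ∀ b ∈ 𝕋, a * b ∈ 𝕋) :
    ∃ E ∈ 𝕋, E * E = E ∧ ∀ z ∈ 𝕋, E * z = z → z * E = z →
      ∃ y ∈ 𝕋, E * y = y ∧ y * E = y ∧ z * y = E ∧ y * z = E := by
  classical
  haveI : Finite (WithOne M) := finOpt
  -- the "monoid padding" of 𝕋 inside `WithOne M`
  set 𝕊 : Set (WithOne M) := insert 1 ((fun t : M => (t : WithOne M)) '' 𝕋) with h𝕊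
  have h1 : (1 : WithOne M) ∈ 𝕊 := Set.mem_insert _ _
  have hcoe : ∀ t ∈ 𝕋, (t : WithOne M) ∈ 𝕊 := fun t ht =>
    Set.mem_insert_of_mem _ ⟨t, ht, rfl⟩
  have hSmem : ∀ a ∈ 𝕊, a = 1 ∨ ∃ t ∈ 𝕋, a = (t : WithOne M) := by
    intro a ha
    rcases ha with rfl | ⟨t, ht, rfl⟩
    · exact Or.inl rfl
    · exact Or.inr ⟨t, ht, rfl⟩
  have hSmul : ∀ a ∈ 𝕊, ∀ b ∈ 𝕊, a * b ∈ 𝕊 := by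
    intro a ha b hb
    rcases hSmem a ha with rfl | ⟨t, ht, rfl⟩
    · simpa using hb
    · rcases hSmem b hb with rfl | ⟨t', ht', rfl⟩
      · simpa using hcoe t ht
      · rw [← WithOne.coe_mul]
        exact hcoe _ (hmul t ht t' ht')
  -- principal two-sided ideals relative to 𝕋
  set J : M → Set M := fun x => {y | ∃ a ∈ 𝕊, ∃ b ∈ 𝕊, a * (x : WithOne M) * b = (y : WithOne M)}
    with hJ
  have hJself : ∀ x, x ∈ J x := fun x => ⟨1, h1, 1, h1, by simp⟩
  have hJtrans : ∀ x y, y ∈ J x → J y ⊆ J x := by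
    intro x y hy z hz
    obtain ⟨a, ha, b, hb, hab⟩ := hy
    obtain ⟨c, hc, d, hd, hcd⟩ := hz
    refine ⟨c * a, hSmul c hc a ha, b * d, hSmul b hb d hd, ?_⟩
    calc c * a * (x : WithOne M) * (b * d) = c * (a * x * b) * d := by
          simp only [mul_assoc]
      _ = c * (y : WithOne M) * d := by rw [hab]
      _ = (z : WithOne M) := hcd
  -- choose a J-minimal element of 𝕋
  obtain ⟨x0, hx0, hmin⟩ := Set.exists_min_image 𝕋 (fun x => (J x).ncard)
    (Set.toFinite _) hne
  have hJeq : ∀ z ∈ 𝕋, z ∈ J x0 → J z = J x0 := by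
    intro z hz hzJ
    exact Set.eq_of_subset_of_ncard_le (hJtrans _ _ hzJ) (hmin z hz) (Set.toFinite _)
  -- an idempotent power of x0
  obtain ⟨n, hn2, hidem⟩ := exists_idem_pow (x0 : WithOne M)
  have hpowmem : ∀ k, 1 ≤ k → ∃ e ∈ 𝕋, ((x0 : WithOne M)) ^ k = (e : WithOne M) := by
    intro k hk
    induction k with
    | zero => omega
    | succ k ih =>
      rcases Nat.eq_or_lt_of_le hk with h' | h'
      · exact ⟨x0, hx0, by rw [← h', pow_one]⟩
      · obtain ⟨e, he, heq⟩ := ih (by omega)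
        exact ⟨e * x0, hmul e he x0 hx0, by rw [pow_succ, heq, WithOne.coe_mul]⟩
  obtain ⟨E, hE𝕋, hEeq⟩ := hpowmem n (by omega)
  obtain ⟨E', hE'𝕋, hE'eq⟩ := hpowmem (n - 1) (by omega)
  have hEE : E * E = E := by
    have : ((E * E : M) : WithOne M) = ((E : M) : WithOne M) := by
      rw [WithOne.coe_mul, ← hEeq, hidem]
    exact WithOne.coe_inj.mp this
  have hEJ : E ∈ J x0 := by
    refine ⟨(E' : WithOne M), hcoe E' hE'𝕋, 1, h1, ?_⟩
    rw [mul_one, ← hE'eq, ← pow_succ]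
    have : n - 1 + 1 = n := by omega
    rw [this, hEeq]
  have hJE : J E = J x0 := hJeq E hE𝕋 hEJ
  refine ⟨E, hE𝕋, hEE, ?_⟩
  intro z hz hz1 hz2
  -- z is J-equivalent to E, so E = p * z * q with p, q ∈ 𝕋
  have hzJE : z ∈ J E := by
    refine ⟨1, h1, (z : WithOne M), hcoe z hz, ?_⟩
    rw [one_mul, ← WithOne.coe_mul, hz1]
  have hJz : J z = J E := by
    rw [hJE]; exact hJeq z hz (hJE ▸ hzJE)
  have hEJz : E ∈ J z := by rw [hJz]; exact hJE ▸ hJself E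
  obtain ⟨a, ha, b, hb, hab⟩ := hEJz
  have hpq : ∃ p ∈ 𝕋, ∃ q ∈ 𝕋, p * z * q = E := by
    rcases hSmem a ha with rfl | ⟨t, ht, rfl⟩ <;> rcases hSmem b hb with rfl | ⟨t', ht', rfl⟩
    · rw [one_mul, mul_one] at hab
      have hzE : z = E := WithOne.coe_inj.mp hab
      exact ⟨E, hE𝕋, E, hE𝕋, by rw [hzE, hEE, hEE]⟩
    · rw [one_mul, ← WithOne.coe_mul] at hab
      have : z * t' = E := WithOne.coe_inj.mp hab
      exact ⟨E, hE𝕋, t', ht', by rw [hz1, this]⟩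
    · rw [mul_one, ← WithOne.coe_mul] at hab
      have : t * z = E := WithOne.coe_inj.mp hab
      exact ⟨t, ht, E, hE𝕋, by rw [this, hEE]⟩
    · rw [← WithOne.coe_mul, ← WithOne.coe_mul] at hab
      exact ⟨t, ht, t', ht', WithOne.coe_inj.mp hab⟩
  obtain ⟨p, hp, q, hq, hpzq⟩ := hpq
  -- sandwich p, q with E
  have hEE' : ∀ w : M, E * (E * w) = E * w := fun w => by rw [← mul_assoc, hEE]
  have hz1' : ∀ w : M, E * (z * w) = z * w := fun w => by rw [← mul_assoc, hz1]
  have hz2' : ∀ w : M, z * (E * w) = z * w := fun w => by rw [← mul_assoc, hz2]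
  have hpzq' : ∀ w : M, p * (z * (q * w)) = E * w := fun w => by
    rw [← mul_assoc, ← mul_assoc, hpzq]
  set a₁ : M := E * p * E with ha₁
  set b₁ : M := E * q * E with hb₁
  have ha₁𝕋 : a₁ ∈ 𝕋 := hmul _ (hmul E hE𝕋 p hp) E hE𝕋
  have hb₁𝕋 : b₁ ∈ 𝕋 := hmul _ (hmul E hE𝕋 q hq) E hE𝕋
  have ha₁l : E * a₁ = a₁ := by rw [ha₁]; simp only [mul_assoc, hEE']
  have ha₁r : a₁ * E = a₁ := by rw [ha₁]; simp only [mul_assoc, hEE]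
  have hb₁l : E * b₁ = b₁ := by rw [hb₁]; simp only [mul_assoc, hEE']
  have hb₁r : b₁ * E = b₁ := by rw [hb₁]; simp only [mul_assoc, hEE]
  have hsand : a₁ * z * b₁ = E := by
    rw [ha₁, hb₁]
    simp only [mul_assoc, hz1', hz2', hEE', hpzq', hEE]
  -- the H-class / group machinery
  set G : Set M := {g | g ∈ 𝕋 ∧ E * g = g ∧ g * E = g} with hG
  have hEG : E ∈ G := ⟨hE𝕋, hEE, hEE⟩
  have hGmul : ∀ u ∈ G, ∀ v ∈ G, u * v ∈ G := by
    rintro u ⟨hu, hul, hur⟩ v ⟨hv, hvl, hvr⟩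
    exact ⟨hmul u hu v hv, by rw [← mul_assoc, hul], by rw [mul_assoc, hvr]⟩
  have hinv : ∀ u ∈ G, ∀ v ∈ G, u * v = E → v * u = E := by
    intro u hu v hv huv
    have hmaps : Set.MapsTo (fun g => u * g) G G := fun g hg => hGmul u hu g hg
    have hsurj : Set.SurjOn (fun g => u * g) G G := by
      intro g hg
      refine ⟨v * g, hGmul v hv g hg, ?_⟩
      show u * (v * g) = g
      rw [← mul_assoc, huv, hg.2.1]
    have hbij := (Set.Finite.surjOn_iff_bijOn_of_mapsTo (Set.toFinite G) hmaps).mp hsurj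
    have hinjOn := hbij.injOn
    have h1 : u * (v * u) = u * E := by rw [← mul_assoc, huv, hu.2.1, hu.2.2]
    exact hinjOn (hGmul v hv u hu) hEG h1
  have hzG : z ∈ G := ⟨hz, hz1, hz2⟩
  have ha₁G : a₁ ∈ G := ⟨ha₁𝕋, ha₁l, ha₁r⟩
  have hb₁G : b₁ ∈ G := ⟨hb₁𝕋, hb₁l, hb₁r⟩
  have hc : a₁ * (z * b₁) = E := by rw [← mul_assoc]; exact hsand
  have hca : (z * b₁) * a₁ = E := hinv a₁ ha₁G (z * b₁) (hGmul z hzG b₁ hb₁G) hc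
  have hzy : z * (b₁ * a₁) = E := by rw [← mul_assoc]; exact hca
  have hyG : b₁ * a₁ ∈ G := hGmul b₁ hb₁G a₁ ha₁G
  have hyz : (b₁ * a₁) * z = E := hinv z hzG (b₁ * a₁) hyG hzy
  exact ⟨b₁ * a₁, hyG.1, hyG.2.1, hyG.2.2, hzy, hyz⟩

end Stmt13Aux

theorem stmt13 {S : Type} [Semigroup S] [Fintype S] (𝕋 : Set (Set S))
    (hne : 𝕋.Nonempty)
    (hmul : ∀ T ∈ 𝕋, ∀ T' ∈ 𝕋, T * T' ∈ 𝕋)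
    (hpg : ∀ T ∈ 𝕋, ⋃₀ 𝕋 = T * ⋃₀ 𝕋 ∧ ⋃₀ 𝕋 = (⋃₀ 𝕋) * T) :
    ∃ 𝔾 ⊆ 𝕋, IsGroupSet 𝔾 ∧ ⋃₀ 𝔾 = ⋃₀ 𝕋 := by
  classical
  obtain ⟨E, hE𝕋, hEE, hinv⟩ := Stmt13Aux.main 𝕋 hne hmul
  refine ⟨{g | g ∈ 𝕋 ∧ E * g = g ∧ g * E = g}, fun g hg => hg.1, ?_, ?_⟩
  · constructor
    · rintro x ⟨hx, hxl, hxr⟩ y ⟨hy, hyl, hyr⟩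
      exact ⟨hmul x hx y hy, by rw [← mul_assoc, hxl], by rw [mul_assoc, hyr]⟩
    · refine ⟨E, ⟨hE𝕋, hEE, hEE⟩, fun x hx => ⟨hx.2.1, hx.2.2⟩, ?_⟩
      rintro x ⟨hx, hxl, hxr⟩
      obtain ⟨y, hy, hyl, hyr, h1, h2⟩ := hinv x hx hxl hxr
      exact ⟨y, ⟨hy, hyl, hyr⟩, h1, h2⟩
  · apply Set.Subset.antisymm
    · exact Set.sUnion_mono fun g hg => hg.1
    · intro u hu
      obtain ⟨hU1, hU2⟩ := hpg E hE𝕋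
      have hu1 : u ∈ E * ⋃₀ 𝕋 := hU1 ▸ hu
      obtain ⟨e, he, w, hw, rfl⟩ := hu1
      have hw2 : w ∈ (⋃₀ 𝕋) * E := hU2 ▸ hw
      obtain ⟨w', hw', e', he', rfl⟩ := hw2
      obtain ⟨T₀, hT₀, hwT₀⟩ := hw'
      refine Set.mem_sUnion.mpr ⟨E * T₀ * E,
        ⟨hmul _ (hmul E hE𝕋 T₀ hT₀) E hE𝕋, ?_, ?_⟩, ?_⟩
      · rw [← mul_assoc, ← mul_assoc, hEE]
      · rw [mul_assoc, hEE]
      · have := Set.mul_mem_mul (Set.mul_mem_mul he hwT₀) he'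
        show e * (w' * e') ∈ E * T₀ * E
        rwa [← mul_assoc]


end FOSep
end

section
/- Let S be a finite semigroup and 𝕊 a subsemigroup of 2^S. Then Sat(𝕊) = Sat_G(𝕊) = Sat_H(𝕊). -/
open Pointwise

namespace FOSep

/-! ### Auxiliary lemmas for Statement 15 -/

section Stmt15Aux
variable {M : Type} [Semigroup M]

theorem spow_succ' (x : M) (n : ℕ) : spow x (n + 1) = spow x n * x := rfl

theorem spow_add' (x : M) (m n : ℕ) : spow x (m + n + 1) = spow x m * spow x n := by
  induction n with
  | zero => rfl
  | succ n ih =>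
    have h : m + (n + 1) + 1 = (m + n + 1) + 1 := by omega
    rw [h, spow_succ', ih, spow_succ', mul_assoc]

theorem spow_shift' (x : M) {i p : ℕ} (h : spow x (i + p + 1) = spow x i) :
    ∀ d, spow x (i + d + p + 1) = spow x (i + d) := by
  intro d
  induction d with
  | zero => simpa using h
  | succ d ih =>
    have h1 : i + (d + 1) + p + 1 = (i + d + p + 1) + 1 := by omega
    rw [h1, spow_succ', ih]
    exact (spow_succ' x (i + d)).symm

theorem spow_shift_mul' (x : M) {i p : ℕ} (h : spow x (i + p + 1) = spow x i) :
    ∀ a d, spow x (i + d + a * (p + 1)) = spow x (i + d) := by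
  intro a
  induction a with
  | zero => intro d; simp
  | succ a ih =>
    intro d
    have h1 : i + d + (a + 1) * (p + 1) = i + (d + a * (p + 1)) + p + 1 := by ring
    rw [h1, spow_shift' x h, ← Nat.add_assoc, ih]

theorem exists_spow_idem [Finite M] (x : M) :
    ∃ n, spow x n * spow x n = spow x n := by
  obtain ⟨i, j, hij, hfe⟩ := Finite.exists_ne_map_eq_of_infinite (spow x)
  have main : ∀ i j : ℕ, i < j → spow x i = spow x j →
      ∃ n, spow x n * spow x n = spow x n := by
    intro i j hlt he
    set p := j - i - 1 with hp
    have h : spow x (i + p + 1) = spow x i := by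
      have h2 : i + p + 1 = j := by omega
      rw [h2, he]
    refine ⟨i + p * (i + 1), ?_⟩
    rw [← spow_add']
    have h2 : i + p * (i + 1) + (i + p * (i + 1)) + 1
        = i + (p * (i + 1)) + (i + 1) * (p + 1) := by ring
    rw [h2, spow_shift_mul' x h]
  rcases Nat.lt_or_ge i j with hlt | hge
  · exact main i j hlt hfe
  · exact main j i (by omega) hfe.symm

theorem spow_spow' (x : M) (m k : ℕ) :
    spow (spow x m) k = spow x (k * (m + 1) + m) := by
  induction k with
  | zero => simp [spow]
  | succ k ih =>
    rw [spow_succ', ih, ← spow_add']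
    congr 1
    ring

end Stmt15Aux

section Stmt15Main

variable {S : Type} [Semigroup S]

theorem sat_closed (𝕊 : Set (Set S)) : SatClosed 𝕊 (Sat 𝕊) := by
  refine ⟨?_, ?_, ?_, ?_⟩
  · intro T hT X hX; exact hX.1 hT
  · intro T hT T' hsub X hX; exact hX.2.1 T (hT X hX) T' hsub
  · intro T hT T' hT' X hX; exact hX.2.2.1 T (hT X hX) T' (hT' X hX)
  · intro T hT n hn X hX; exact hX.2.2.2 T (hT X hX) n hn

theorem sat_le {𝕊 X : Set (Set S)} (h : SatClosed 𝕊 X) : Sat 𝕊 ⊆ X :=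
  fun _ hT => hT X h

theorem satG_le {𝕊 X : Set (Set S)} (h : SatGClosed 𝕊 X) : SatG 𝕊 ⊆ X :=
  fun _ hT => hT X h

theorem satH_le {𝕊 X : Set (Set S)} (h : SatHClosed 𝕊 X) : SatH 𝕊 ⊆ X :=
  fun _ hT => hT X h

/-- Membership of spow-powers in a multiplicatively closed set. -/
theorem spow_mem {X : Set (Set S)} (hmul : ∀ T ∈ X, ∀ T' ∈ X, T * T' ∈ X)
    {T : Set S} (hT : T ∈ X) : ∀ k, spow T k ∈ X := by
  intro k
  induction k with
  | zero => exact hT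
  | succ k ih => exact hmul _ ih _ hT

/-- The FO-operation is available in `SatG`: proved via the cyclic group
generated by `T^ω · T`. -/
theorem satG_fo (𝕊 : Set (Set S)) (T : Set S) (hT : T ∈ SatG 𝕊) (n : ℕ)
    (hn : spow T n * spow T n = spow T n) :
    spow T n ∪ spow T n * T ∈ SatG 𝕊 := by
  intro X hX
  obtain ⟨hsub, hdown, hmul, hgrp⟩ := hX
  have hTX : T ∈ X := hT X ⟨hsub, hdown, hmul, hgrp⟩
  set U : Set S := spow T n * T with hU
  have hUeq : U = spow T (n + 1) := rfl
  -- reduction modulo the idempotent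
  have hidem : spow T (n + 0 + n + 1) = spow T (n + 0) := by
    rw [spow_add']
    simpa using hn
  have red : ∀ d, spow T (n + d + n + 1) = spow T (n + d) :=
    spow_shift' T hidem
  have key1 : ∀ k, spow U k = spow T (n + k + 1) := by
    intro k
    induction k with
    | zero => exact hUeq
    | succ k ih =>
      rw [spow_succ', ih, hUeq, ← spow_add']
      have h1 : n + k + 1 + (n + 1) + 1 = n + (k + 2) + n + 1 := by omega
      rw [h1, red (k + 2)]
      all_goals rfl
  have key2 : ∀ k, spow U (k + (n + 1)) = spow U k := by
    intro k
    rw [key1, key1]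
    have h1 : n + (k + (n + 1)) + 1 = n + (k + 1) + n + 1 := by omega
    rw [h1, red]
    all_goals (congr 1 <;> omega)
  have key2m : ∀ j k, spow U (k + j * (n + 1)) = spow U k := by
    intro j
    induction j with
    | zero => intro k; simp
    | succ j ih =>
      intro k
      have h1 : k + (j + 1) * (n + 1) = (k + j * (n + 1)) + (n + 1) := by ring
      rw [h1, key2, ih]
  have hUX : ∀ k, spow U k ∈ X := spow_mem hmul (hmul _ (spow_mem hmul hTX n) _ hTX)
  set 𝔾 : Set (Set S) := Set.range (spow U) with h𝔾
  have h𝔾X : 𝔾 ⊆ X := by rintro _ ⟨k, rfl⟩; exact hUX k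
  have hgroup : IsGroupSet 𝔾 := by
    constructor
    · rintro _ ⟨i, rfl⟩ _ ⟨j, rfl⟩
      exact ⟨i + j + 1, spow_add' U i j⟩
    · refine ⟨spow U n, ⟨n, rfl⟩, ?_, ?_⟩
      · rintro _ ⟨k, rfl⟩
        constructor
        · rw [← spow_add']
          have h1 : n + k + 1 = k + (n + 1) := by omega
          rw [h1, key2]
        · rw [← spow_add']
          have h1 : k + n + 1 = k + (n + 1) := by omega
          rw [h1, key2]
      · rintro _ ⟨k, rfl⟩
        refine ⟨spow U (n * (k + 2)), ⟨_, rfl⟩, ?_, ?_⟩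
        · rw [← spow_add']
          have h1 : k + n * (k + 2) + 1 = n + (k + 1) * (n + 1) := by ring
          rw [h1, key2m]
        · rw [← spow_add']
          have h1 : n * (k + 2) + k + 1 = n + (k + 1) * (n + 1) := by ring
          rw [h1, key2m]
  have hUnion : ⋃₀ 𝔾 ∈ X := hgrp 𝔾 h𝔾X hgroup
  refine hdown _ hUnion _ ?_
  intro y hy
  rcases hy with hy | hy
  · refine Set.mem_sUnion.2 ⟨spow U n, ⟨n, rfl⟩, ?_⟩
    have hEn : spow U n = spow T n := by
      rw [key1]
      have h1 : n + n + 1 = n + 0 + n + 1 := by omega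
      rw [h1, red 0]
      all_goals rfl
    rw [hEn]; exact hy
  · refine Set.mem_sUnion.2 ⟨spow U 0, ⟨0, rfl⟩, ?_⟩
    rw [key1]
    exact hy

theorem sat_subset_satG (𝕊 : Set (Set S)) : Sat 𝕊 ⊆ SatG 𝕊 := by
  refine sat_le ⟨?_, ?_, ?_, ?_⟩
  · intro T hT X hX; exact hX.1 hT
  · intro T hT T' hsub X hX; exact hX.2.1 T (hT X hX) T' hsub
  · intro T hT T' hT' X hX; exact hX.2.2.1 T (hT X hX) T' (hT' X hX)
  · intro T hT n hn; exact satG_fo 𝕊 T hT n hn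

theorem satG_subset_satH (𝕊 : Set (Set S)) : SatG 𝕊 ⊆ SatH 𝕊 := by
  refine satG_le ⟨?_, ?_, ?_, ?_⟩
  · intro T hT X hX; exact hX.1 hT
  · intro T hT T' hsub X hX; exact hX.2.1 T (hT X hX) T' hsub
  · intro T hT T' hT' X hX; exact hX.2.2.1 T (hT X hX) T' (hT' X hX)
  · -- unions of groups, via H-classes
    intro 𝔾 h𝔾 hgroup X hX
    obtain ⟨hsub, hdown, hmul, hhcl⟩ := hX
    have h𝔾X : 𝔾 ⊆ X := fun T hT => h𝔾 hT X ⟨hsub, hdown, hmul, hhcl⟩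
    obtain ⟨hGmul, e, heG, hid, hinv⟩ := hgroup
    have heX : e ∈ X := h𝔾X heG
    have hH : ⋃₀ { s' ∈ X | HEquivIn X e s' } ∈ X :=
      hhcl _ ⟨e, heX, rfl⟩
    refine hdown _ hH _ ?_
    refine Set.sUnion_subset_sUnion ?_
    intro g hg
    obtain ⟨y, hy, hgy, hyg⟩ := hinv g hg
    refine ⟨h𝔾X hg, Or.inr ⟨⟨g, h𝔾X hg, (hid g hg).1⟩, ⟨y, h𝔾X hy, hgy⟩,
      ⟨g, h𝔾X hg, (hid g hg).2⟩, ⟨y, h𝔾X hy, hyg⟩⟩⟩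

end Stmt15Main

section Stmt15Hard

variable {S : Type} [Semigroup S] [Fintype S]

/-- The key pair lemma: if `s ≠ s'` are `H`-equivalent in `Sat 𝕊`, then there
is `F ∈ Sat 𝕊` containing an `e` with `s·e = s` and a `g` with `s·g = s'`. -/
theorem key_pair {𝕊 : Set (Set S)} {s s' : Set S} (hs : s ∈ Sat 𝕊)
    (hne : s ≠ s') (hH : HEquivIn (Sat 𝕊) s s') :
    ∃ F e g : Set S, F ∈ Sat 𝕊 ∧ e ⊆ F ∧ g ⊆ F ∧ s * e = s ∧ s * g = s' := by
  obtain ⟨hSsub, hSdown, hSmul, hSfo⟩ := sat_closed 𝕊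
  rcases hH with rfl | ⟨⟨a, ha, hsa⟩, ⟨b, hb, hsb⟩, ⟨u, hu, hus⟩, -⟩
  · exact absurd rfl hne
  -- Claim 1 : s * a^k = u^k * s
  have claim1 : ∀ k, s * spow a k = spow u k * s := by
    intro k
    induction k with
    | zero => show s * a = u * s; rw [hsa, hus]
    | succ k ih =>
      rw [spow_succ', spow_succ', ← mul_assoc, ih, mul_assoc, hsa, ← hus,
        ← mul_assoc]
  -- Claim 2 : stepping down with b
  have claim2 : ∀ k, (s * spow a (k + 1)) * b = s * spow a k := by
    intro k
    rw [spow_succ', ← mul_assoc, claim1 k, mul_assoc (spow u k) s a, hsa,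
      mul_assoc, hsb, ← claim1 k]
  have claim2' : (s * spow a 0) * b = s := by
    show (s * a) * b = s
    rw [hsa, hsb]
  -- the sequence G
  set G : ℕ → Set S := fun k => Nat.rec s (fun k _ => s * spow a k) k with hG
  have hG0 : G 0 = s := rfl
  have hGs : ∀ k, G (k + 1) = s * spow a k := fun k => rfl
  have Gstep : ∀ k, G (k + 1) * b = G k := by
    intro k
    cases k with
    | zero => rw [hGs, hG0]; exact claim2'
    | succ k => rw [hGs, hGs]; exact claim2 k
  have down : ∀ t k, G (k + t + 1) * spow b t = G k := by
    intro t
    induction t with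
    | zero => intro k; exact Gstep k
    | succ t ih =>
      intro k
      rw [spow_succ', ← mul_assoc]
      have h1 : k + (t + 1) + 1 = (k + 1) + t + 1 := by omega
      rw [h1, ih (k + 1), Gstep]
  -- pigeonhole: some power returns to s
  obtain ⟨i, j, hij, hfe⟩ :=
    Finite.exists_ne_map_eq_of_infinite (fun k => s * spow a k)
  have exists_ret : ∃ M, s * spow a M = s := by
    have main : ∀ i j : ℕ, i < j → s * spow a i = s * spow a j →
        ∃ M, s * spow a M = s := by
      intro i j hlt he
      have hGij : G (i + 1) = G (j + 1) := by rw [hGs, hGs]; exact he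
      have h1 : G (i + 1) * spow b i = G 0 := by
        have := down i 0
        have h2 : 0 + i + 1 = i + 1 := by omega
        rwa [h2] at this
      have h2 : G (j + 1) * spow b i = G (j - i) := by
        have := down i (j - i)
        have h3 : j - i + i + 1 = j + 1 := by omega
        rwa [h3] at this
      refine ⟨j - i - 1, ?_⟩
      have h4 : G (j - i) = s := by rw [← h2, ← hGij, h1, hG0]
      have h5 : j - i = (j - i - 1) + 1 := by omega
      rw [h5] at h4
      rw [← hGs]
      exact h4
    rcases Nat.lt_or_ge i j with hlt | hge
    · exact main i j hlt hfe
    · exact main j i (by omega) hfe.symm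
  obtain ⟨M, hM⟩ := exists_ret
  -- s is fixed by all powers of c = a^(M+1)
  have sM : ∀ k, s * spow (spow a M) k = s := by
    intro k
    induction k with
    | zero => exact hM
    | succ k ih => rw [spow_succ', ← mul_assoc, ih, hM]
  obtain ⟨n', hc⟩ := exists_spow_idem (spow a M)
  set n : ℕ := n' * (M + 1) + M with hn
  have haM : spow a n = spow (spow a M) n' := (spow_spow' a M n').symm
  have hidem : spow a n * spow a n = spow a n := by rw [haM]; exact hc
  have hfix : s * spow a n = s := by rw [haM]; exact sM n'
  have haX : a ∈ Sat 𝕊 := ha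
  have hF : spow a n ∪ spow a n * a ∈ Sat 𝕊 := hSfo a haX n hidem
  refine ⟨spow a n ∪ spow a n * a, spow a n, spow a n * a, hF,
    Set.subset_union_left, Set.subset_union_right, hfix, ?_⟩
  rw [← mul_assoc, hfix, hsa]

/-- folding products preserves membership -/
theorem foldl_mem {X : Set (Set S)} (hmul : ∀ T ∈ X, ∀ T' ∈ X, T * T' ∈ X)
    (F : Set S → Set S) :
    ∀ (L : List (Set S)) (acc : Set S), acc ∈ X → (∀ t ∈ L, F t ∈ X) →
      List.foldl (fun a t => a * F t) acc L ∈ X := by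
  intro L
  induction L with
  | nil => intro acc hacc _; exact hacc
  | cons t L ih =>
    intro acc hacc hL
    exact ih _ (hmul _ hacc _ (hL t List.mem_cons_self))
      (fun t' ht' => hL t' (List.mem_cons_of_mem t ht'))

/-- folding products keeps a fixed point inside -/
theorem foldl_contains (F : Set S → Set S) (x : Set S) :
    ∀ (L : List (Set S)) (acc : Set S), x ⊆ acc →
      (∀ t ∈ L, ∃ e, e ⊆ F t ∧ x * e = x) →
      x ⊆ List.foldl (fun a t => a * F t) acc L := by
  intro L
  induction L with
  | nil => intro acc hacc _; exact hacc
  | cons t L ih =>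
    intro acc hacc hL
    obtain ⟨e, heF, hxe⟩ := hL t List.mem_cons_self
    refine ih _ ?_ (fun t' ht' => hL t' (List.mem_cons_of_mem t ht'))
    calc x = x * e := hxe.symm
      _ ⊆ acc * F t := Set.mul_subset_mul hacc heF

/-- `Sat` is closed under unions of `H`-classes. -/
theorem sat_hclass (𝕊 : Set (Set S)) (H : Set (Set S))
    (hH : IsHClassIn (Sat 𝕊) H) : ⋃₀ H ∈ Sat 𝕊 := by
  obtain ⟨hSsub, hSdown, hSmul, hSfo⟩ := sat_closed 𝕊
  obtain ⟨s, hs, rfl⟩ := hH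
  by_cases htriv : ∀ s' ∈ { s' ∈ Sat 𝕊 | HEquivIn (Sat 𝕊) s s' }, s' = s
  · refine hSdown s hs _ ?_
    intro y hy
    obtain ⟨s', hs', hys'⟩ := hy
    rwa [htriv s' hs'] at hys'
  push_neg at htriv
  obtain ⟨s₀, hs₀H, hs₀ne⟩ := htriv
  obtain ⟨F₀, e₀, g₀, hF₀, he₀, hg₀, hse₀, hsg₀⟩ :=
    key_pair hs (fun h => hs₀ne h.symm) hs₀H.2
  -- choice of factors for each element of the H-class
  have key : ∀ s' : Set S, ∃ F e g : Set S,
      s' ∈ { s' ∈ Sat 𝕊 | HEquivIn (Sat 𝕊) s s' } →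
        F ∈ Sat 𝕊 ∧ e ⊆ F ∧ g ⊆ F ∧ s * e = s ∧ s * g = s' := by
    intro s'
    by_cases hcase : s' = s
    · subst hcase
      exact ⟨F₀, e₀, e₀, fun _ => ⟨hF₀, he₀, he₀, hse₀, hse₀⟩⟩
    by_cases hmem : s' ∈ { s' ∈ Sat 𝕊 | HEquivIn (Sat 𝕊) s s' }
    · obtain ⟨F, e, g, h1, h2, h3, h4, h5⟩ :=
        key_pair hs (fun h => hcase h.symm) hmem.2
      exact ⟨F, e, g, fun _ => ⟨h1, h2, h3, h4, h5⟩⟩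
    · exact ⟨F₀, e₀, e₀, fun h => absurd h hmem⟩
  choose F E Gg hkey using key
  set H := { s' ∈ Sat 𝕊 | HEquivIn (Sat 𝕊) s s' } with hHdef
  have hfin : H.Finite := Set.toFinite H
  set lst : List (Set S) := hfin.toFinset.toList with hlst
  have hmemlst : ∀ t : Set S, t ∈ lst ↔ t ∈ H := by
    intro t
    rw [hlst, Finset.mem_toList, Set.Finite.mem_toFinset]
  set P : Set S := List.foldl (fun a t => a * F t) s lst with hP
  have hPX : P ∈ Sat 𝕊 := by
    refine foldl_mem hSmul F lst s hs ?_
    intro t ht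
    exact (hkey t ((hmemlst t).1 ht)).1
  refine hSdown P hPX _ ?_
  intro y hy
  obtain ⟨s', hs'H, hys'⟩ := hy
  -- split the list at s'
  obtain ⟨L1, L2, hsplit⟩ := List.append_of_mem ((hmemlst s').2 hs'H)
  have hs'P : s' ⊆ P := by
    rw [hP, hsplit, List.foldl_append, List.foldl_cons]
    have hmem1 : ∀ t ∈ L1, t ∈ H := by
      intro t ht
      exact (hmemlst t).1 (by rw [hsplit]; exact List.mem_append_left _ ht)
    have hmem2 : ∀ t ∈ L2, t ∈ H := by
      intro t ht
      refine (hmemlst t).1 ?_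
      rw [hsplit]
      exact List.mem_append_right _ (List.mem_cons_of_mem _ ht)
    -- step 1: s is contained in the prefix product
    have step1 : s ⊆ List.foldl (fun a t => a * F t) s L1 := by
      refine foldl_contains F s L1 s (subset_refl s) ?_
      intro t ht
      obtain ⟨h1, h2, h3, h4, h5⟩ := hkey t (hmem1 t ht)
      exact ⟨E t, h2, h4⟩
    -- step 2: after multiplying by F s', we contain s'
    obtain ⟨hF1, hF2, hF3, hF4, hF5⟩ := hkey s' hs'H
    have step2 : s' ⊆ (List.foldl (fun a t => a * F t) s L1) * F s' := by
      calc s' = s * Gg s' := hF5.symm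
        _ ⊆ _ := Set.mul_subset_mul step1 hF3
    -- step 3: the suffix keeps s' inside
    refine foldl_contains F s' L2 _ step2 ?_
    intro t ht
    obtain ⟨h1, h2, h3, h4, h5⟩ := hkey t (hmem2 t ht)
    refine ⟨E t, h2, ?_⟩
    rcases hs'H.2 with rfl | ⟨-, -, ⟨t₀, ht₀, ht₀s⟩, -⟩
    · exact h4
    · rw [← ht₀s, mul_assoc, h4]
  exact hs'P hys'

theorem satH_subset_sat (𝕊 : Set (Set S)) : SatH 𝕊 ⊆ Sat 𝕊 := by
  obtain ⟨hSsub, hSdown, hSmul, hSfo⟩ := sat_closed 𝕊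
  exact satH_le ⟨hSsub, hSdown, hSmul, fun H hH => sat_hclass 𝕊 H hH⟩

end Stmt15Hard


theorem stmt15 {S : Type} [Semigroup S] [Fintype S]
    (𝕊 : Subsemigroup (Set S)) :
    Sat (𝕊 : Set (Set S)) = SatG (𝕊 : Set (Set S)) ∧
    SatG (𝕊 : Set (Set S)) = SatH (𝕊 : Set (Set S)) := by
  have h1 := sat_subset_satG (𝕊 : Set (Set S))
  have h2 := satG_subset_satH (𝕊 : Set (Set S))
  have h3 := satH_subset_sat (𝕊 : Set (Set S))
  exact ⟨Set.Subset.antisymm h1 (fun T hT => h3 (h2 hT)),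
    Set.Subset.antisymm h2 (fun T hT => h1 (h3 hT))⟩

end FOSep
end

section
/- Let A be a finite alphabet, S_∞ a finite set, α_∞: A^∞ → S_∞ a map, and let C be a class of ω-languages over A that is nonempty and closed under Boolean operations (finite unions, intersections, and complement within A^∞). Let L₁ = α_∞⁻¹(T₁) and L₂ = α_∞⁻¹(T₂) for T₁, T₂ ⊆ S_∞. Then the following are equivalent: (1) L₁ and L₂ are C-separable (some K ∈ C satisfies L₁ ⊆ K and K ∩ L₂ = ∅); (2) for all t₁ ∈ T₁ and t₂ ∈ T₂, {t₁, t₂} ∉ I_C[α_∞]; (3) for every C-partition 𝐊 of A^∞ that is optimal for α_∞, L₁ and L₂ can be separated by a union of blocks of 𝐊. -/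
open Pointwise

namespace FOSep

section Aux17

variable {A Sinf : Type}

/-- The common refinement of two finite partitions is a finite partition. -/
lemma aux17_refine_finPart {X : Type} {P P' : Set (Set X)}
    (hP : FinPart P) (hP' : FinPart P') :
    FinPart {B : Set X | ∃ B₁ ∈ P, ∃ B₂ ∈ P', B = B₁ ∩ B₂} := by
  constructor
  · have h : {B : Set X | ∃ B₁ ∈ P, ∃ B₂ ∈ P', B = B₁ ∩ B₂}
        = (fun q : Set X × Set X => q.1 ∩ q.2) '' (P ×ˢ P') := by
      ext B
      constructor
      · rintro ⟨B₁, hB₁, B₂, hB₂, rfl⟩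
        exact ⟨(B₁, B₂), ⟨hB₁, hB₂⟩, rfl⟩
      · rintro ⟨⟨B₁, B₂⟩, ⟨hB₁, hB₂⟩, rfl⟩
        exact ⟨B₁, hB₁, B₂, hB₂, rfl⟩
    rw [h]
    exact (hP.1.prod hP'.1).image _
  · intro x
    obtain ⟨B₁, ⟨hB₁, hx₁⟩, hu₁⟩ := hP.2 x
    obtain ⟨B₂, ⟨hB₂, hx₂⟩, hu₂⟩ := hP'.2 x
    refine ⟨B₁ ∩ B₂, ⟨⟨B₁, hB₁, B₂, hB₂, rfl⟩, hx₁, hx₂⟩, ?_⟩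
    rintro D ⟨⟨D₁, hD₁, D₂, hD₂, rfl⟩, hxD⟩
    rw [hu₁ D₁ ⟨hD₁, hxD.1⟩, hu₂ D₂ ⟨hD₂, hxD.2⟩]

/-- There exists an optimal C-partition. -/
lemma aux17_exists_optimal [Fintype Sinf] (C : Set (Set (ℕ → A)))
    (hne : C.Nonempty)
    (hunion : ∀ L ∈ C, ∀ L' ∈ C, L ∪ L' ∈ C)
    (hinter : ∀ L ∈ C, ∀ L' ∈ C, L ∩ L' ∈ C)
    (hcompl : ∀ L ∈ C, Lᶜ ∈ C)
    (α : (ℕ → A) → Sinf) :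
    ∃ P : Set (Set (ℕ → A)), CPartInf C P ∧
      ∀ P' : Set (Set (ℕ → A)), CPartInf C P' →
        imprintInf α P ⊆ imprintInf α P' := by
  obtain ⟨L, hL⟩ := hne
  have huniv : (Set.univ : Set (ℕ → A)) ∈ C := by
    have := hunion L hL Lᶜ (hcompl L hL)
    simpa using this
  have hP0 : CPartInf C {(Set.univ : Set (ℕ → A))} := by
    refine ⟨⟨Set.finite_singleton _, ?_⟩, ?_⟩
    · intro x
      refine ⟨Set.univ, ⟨rfl, trivial⟩, ?_⟩
      rintro B ⟨hB, -⟩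
      exact hB
    · rintro B rfl
      exact huniv
  -- the collection of imprints of C-partitions is finite and nonempty
  set S : Set (Set (Set Sinf)) :=
    {I | ∃ P : Set (Set (ℕ → A)), CPartInf C P ∧ imprintInf α P = I} with hS
  have hSfin : S.Finite := Set.toFinite S
  have hSne : S.Nonempty := ⟨_, _, hP0, rfl⟩
  obtain ⟨I, hI, hmin⟩ : ∃ I ∈ S, ∀ I' ∈ S, id I' ≤ id I → id I = id I' := by
    obtain ⟨I, hI, hm⟩ := Set.Finite.exists_minimalFor id S hSfin hSne
    exact ⟨I, hI, fun I' hI' hle => le_antisymm (hm hI' hle) hle⟩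
  obtain ⟨P, hP, rfl⟩ := hI
  refine ⟨P, hP, ?_⟩
  intro P' hP'
  -- common refinement
  set R : Set (Set (ℕ → A)) := {B | ∃ B₁ ∈ P, ∃ B₂ ∈ P', B = B₁ ∩ B₂} with hR
  have hRpart : CPartInf C R := by
    refine ⟨aux17_refine_finPart hP.1 hP'.1, ?_⟩
    rintro B ⟨B₁, hB₁, B₂, hB₂, rfl⟩
    exact hinter B₁ (hP.2 B₁ hB₁) B₂ (hP'.2 B₂ hB₂)
  have hsub1 : imprintInf α R ⊆ imprintInf α P := by
    rintro T ⟨K, ⟨B₁, hB₁, B₂, hB₂, rfl⟩, hT⟩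
    exact ⟨B₁, hB₁, hT.trans (Set.image_mono Set.inter_subset_left)⟩
  have hsub2 : imprintInf α R ⊆ imprintInf α P' := by
    rintro T ⟨K, ⟨B₁, hB₁, B₂, hB₂, rfl⟩, hT⟩
    exact ⟨B₂, hB₂, hT.trans (Set.image_mono Set.inter_subset_right)⟩
  have hRmem : imprintInf α R ∈ S := ⟨R, hRpart, rfl⟩
  have := hmin (imprintInf α R) hRmem hsub1
  calc imprintInf α P = imprintInf α R := this
    _ ⊆ imprintInf α P' := hsub2

/-- Finite unions of members of `C` are in `C`. -/
lemma aux17_sUnion_mem {X : Type} {C : Set (Set X)} (h0 : ∅ ∈ C)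
    (hunion : ∀ L ∈ C, ∀ L' ∈ C, L ∪ L' ∈ C)
    {Q : Set (Set X)} (hfin : Q.Finite) :
    (∀ B ∈ Q, B ∈ C) → ⋃₀ Q ∈ C := by
  refine Set.Finite.induction_on (motive := fun Q _ => (∀ B ∈ Q, B ∈ C) → ⋃₀ Q ∈ C) _ hfin
    (fun _ => by simpa using h0) ?_
  intro a s _ _ ih hmem
  rw [Set.sUnion_insert]
  exact hunion a (hmem a (Set.mem_insert _ _)) _
    (ih fun B hB => hmem B (Set.mem_insert_of_mem _ hB))

/-- Key separation lemma: if no pair `{t₁, t₂}` with `t₁ ∈ T₁`, `t₂ ∈ T₂` is in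
the imprint of `P`, then the union of blocks whose image meets `T₁` separates. -/
lemma aux17_sep {P : Set (Set (ℕ → A))} (hP : FinPart P)
    {α : (ℕ → A) → Sinf} {T₁ T₂ : Set Sinf}
    (h : ∀ t₁ ∈ T₁, ∀ t₂ ∈ T₂, ({t₁, t₂} : Set Sinf) ∉ imprintInf α P) :
    Separates (⋃₀ {B ∈ P | (α '' B ∩ T₁).Nonempty}) (α ⁻¹' T₁) (α ⁻¹' T₂) := by
  constructor
  · intro w hw
    obtain ⟨B, ⟨hBP, hwB⟩, -⟩ := hP.2 w
    exact ⟨B, ⟨hBP, ⟨α w, ⟨w, hwB, rfl⟩, hw⟩⟩, hwB⟩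
  · ext w
    simp only [Set.mem_inter_iff, Set.mem_empty_iff_false, iff_false, not_and]
    rintro ⟨B, ⟨hBP, t₁, ⟨w₁, hw₁B, hαw₁⟩, ht₁⟩, hwB⟩ hw2
    refine h t₁ ht₁ (α w) hw2 ⟨B, hBP, ?_⟩
    rintro s (rfl | rfl)
    · exact ⟨w₁, hw₁B, hαw₁⟩
    · exact ⟨w, hwB, rfl⟩

end Aux17

theorem stmt17 {A Sinf : Type} [Fintype A] [Fintype Sinf]
    (C : Set (Set (ℕ → A)))
    (hne : C.Nonempty)
    (hunion : ∀ L ∈ C, ∀ L' ∈ C, L ∪ L' ∈ C)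
    (hinter : ∀ L ∈ C, ∀ L' ∈ C, L ∩ L' ∈ C)
    (hcompl : ∀ L ∈ C, Lᶜ ∈ C)
    (α : (ℕ → A) → Sinf) (T₁ T₂ : Set Sinf) :
    ((∃ K ∈ C, Separates K (α ⁻¹' T₁) (α ⁻¹' T₂)) ↔
        ∀ t₁ ∈ T₁, ∀ t₂ ∈ T₂, ({t₁, t₂} : Set Sinf) ∉ optImprintInf C α) ∧
    ((∀ t₁ ∈ T₁, ∀ t₂ ∈ T₂, ({t₁, t₂} : Set Sinf) ∉ optImprintInf C α) ↔
        ∀ P : Set (Set (ℕ → A)), CPartInf C P →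
          (∀ P' : Set (Set (ℕ → A)), CPartInf C P' →
            imprintInf α P ⊆ imprintInf α P') →
          ∃ Q ⊆ P, Separates (⋃₀ Q) (α ⁻¹' T₁) (α ⁻¹' T₂)) := by
  obtain ⟨L, hL⟩ := hne
  have hempty : (∅ : Set (ℕ → A)) ∈ C := by
    have := hinter L hL Lᶜ (hcompl L hL)
    simpa using this
  obtain ⟨Popt, hPopt, hPoptMin⟩ :=
    aux17_exists_optimal C ⟨L, hL⟩ hunion hinter hcompl α
  -- from a partition which is optimal, non-membership in optImprint transfers
  have key : ∀ P : Set (Set (ℕ → A)), CPartInf C P →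
      (∀ P' : Set (Set (ℕ → A)), CPartInf C P' →
        imprintInf α P ⊆ imprintInf α P') →
      (∀ t₁ ∈ T₁, ∀ t₂ ∈ T₂, ({t₁, t₂} : Set Sinf) ∉ optImprintInf C α) →
      Separates (⋃₀ {B ∈ P | (α '' B ∩ T₁).Nonempty}) (α ⁻¹' T₁) (α ⁻¹' T₂) := by
    intro P hP hopt h
    refine aux17_sep hP.1 ?_
    intro t₁ ht₁ t₂ ht₂ himp
    exact h t₁ ht₁ t₂ ht₂ (fun P' hP' => hopt P' hP' himp)
  constructor
  · constructor
    · -- (1) → (2)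
      rintro ⟨K, hKC, hsub, hdis⟩ t₁ ht₁ t₂ ht₂ hopt
      have hPKC : CPartInf C {K, Kᶜ} := by
        refine ⟨⟨(Set.finite_singleton Kᶜ).insert K, ?_⟩, ?_⟩
        · intro x
          by_cases hx : x ∈ K
          · refine ⟨K, ⟨Set.mem_insert _ _, hx⟩, ?_⟩
            rintro B ⟨hB | hB, hxB⟩
            · exact hB
            · exact absurd hx (by rw [hB] at hxB; exact hxB)
          · refine ⟨Kᶜ, ⟨Set.mem_insert_of_mem _ rfl, hx⟩, ?_⟩
            rintro B ⟨hB | hB, hxB⟩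
            · exact absurd hxB (by rw [hB]; exact hx)
            · exact hB
        · rintro B (rfl | rfl)
          · exact hKC
          · exact hcompl K hKC
      obtain ⟨B, hB, hTsub⟩ := hopt {K, Kᶜ} hPKC
      obtain ⟨w₁, hw₁B, hαw₁⟩ := hTsub (Set.mem_insert t₁ {t₂})
      obtain ⟨w₂, hw₂B, hαw₂⟩ := hTsub (Set.mem_insert_of_mem t₁ rfl)
      have hw₁L : w₁ ∈ α ⁻¹' T₁ := by simp [Set.mem_preimage, hαw₁, ht₁]
      have hw₂L : w₂ ∈ α ⁻¹' T₂ := by simp [Set.mem_preimage, hαw₂, ht₂]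
      rcases hB with rfl | rfl
      · exact absurd (Set.mem_inter hw₂B hw₂L) (by rw [hdis]; exact id)
      · exact hw₁B (hsub hw₁L)
    · -- (2) → (1)
      intro h
      refine ⟨⋃₀ {B ∈ Popt | (α '' B ∩ T₁).Nonempty}, ?_, ?_⟩
      · refine aux17_sUnion_mem hempty hunion
          (hPopt.1.1.subset (Set.sep_subset _ _)) ?_
        rintro B ⟨hBP, -⟩
        exact hPopt.2 B hBP
      · exact key Popt hPopt hPoptMin h
  · constructor
    · -- (2) → (3)
      intro h P hP hopt
      exact ⟨{B ∈ P | (α '' B ∩ T₁).Nonempty}, Set.sep_subset _ _,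
        key P hP hopt h⟩
    · -- (3) → (2)
      intro h t₁ ht₁ t₂ ht₂ hmem
      obtain ⟨Q, hQP, hsub, hdis⟩ := h Popt hPopt hPoptMin
      obtain ⟨B, hBP, hTsub⟩ := hmem Popt hPopt
      obtain ⟨w₁, hw₁B, hαw₁⟩ := hTsub (Set.mem_insert t₁ {t₂})
      obtain ⟨w₂, hw₂B, hαw₂⟩ := hTsub (Set.mem_insert_of_mem t₁ rfl)
      have hw₁L : w₁ ∈ α ⁻¹' T₁ := by simp [Set.mem_preimage, hαw₁, ht₁]
      have hw₂L : w₂ ∈ α ⁻¹' T₂ := by simp [Set.mem_preimage, hαw₂, ht₂]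
      obtain ⟨B', hB'Q, hw₁B'⟩ := hsub hw₁L
      -- uniqueness of the block containing w₁ gives B' = B
      obtain ⟨D, -, hDuniq⟩ := hPopt.1.2 w₁
      have hBD : B = D := hDuniq B ⟨hBP, hw₁B⟩
      have hB'D : B' = D := hDuniq B' ⟨hQP hB'Q, hw₁B'⟩
      have hBQ : B ∈ Q := by rw [hBD, ← hB'D]; exact hB'Q
      have : w₂ ∈ (⋃₀ Q) ∩ (α ⁻¹' T₂) := ⟨⟨B, hBQ, hw₂B⟩, hw₂L⟩
      rw [hdis] at this
      exact this

end FOSep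
end

section
/- Let A be a finite alphabet, S_∞ a finite set, α_∞: A^∞ → S_∞ a map, and T ⊆ S_∞. Then T belongs to the optimal FO-imprint I[α_∞] if and only if for every k ∈ ℕ there exists an equivalence class W ⊆ A^∞ of the relation ≡_k on ω-words such that T ⊆ α_∞(W). -/
open Pointwise

namespace FOSep

section Stmt18Aux

open Classical

variable {A : Type}

/-- All variable indices occurring anywhere in a formula. -/
def Form.allVars {A : Type} : Form A → Finset ℕ
  | .letter _ i => {i}
  | .lt i j => {i, j}
  | .not φ => Form.allVars φ
  | .and φ ψ => Form.allVars φ ∪ Form.allVars ψ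
  | .ex n φ => insert n (Form.allVars φ)

/-- Rename variables so that bound variables are numbered by depth. -/
def Form.normv {A : Type} (σ : ℕ → ℕ) (d : ℕ) : Form A → Form A
  | .letter a i => .letter a (σ i)
  | .lt i j => .lt (σ i) (σ j)
  | .not φ => .not (Form.normv σ d φ)
  | .and φ ψ => .and (Form.normv σ d φ) (Form.normv σ d ψ)
  | .ex n φ => .ex d (Form.normv (Function.update σ n d) (d+1) φ)

lemma rank_normv (σ : ℕ → ℕ) (d : ℕ) (φ : Form A) :
    (Form.normv σ d φ).rank = φ.rank := by
  induction φ generalizing σ d with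
  | letter a i => rfl
  | lt i j => rfl
  | not φ ih => simp [Form.normv, Form.rank, ih]
  | and φ ψ ih₁ ih₂ => simp [Form.normv, Form.rank, ih₁, ih₂]
  | ex n φ ih => simp [Form.normv, Form.rank, ih]

lemma interpInf_congr (w : ℕ → A) (φ : Form A) (v v' : ℕ → ℕ)
    (h : ∀ i ∈ φ.freeVars, v i = v' i) :
    InterpInf w φ v ↔ InterpInf w φ v' := by
  induction φ generalizing v v' with
  | letter a i =>
      simp only [InterpInf, h i (by simp [Form.freeVars])]
  | lt i j =>
      simp only [InterpInf, h i (by simp [Form.freeVars]), h j (by simp [Form.freeVars])]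
  | not φ ih =>
      simp only [InterpInf]
      rw [ih v v' (fun i hi => h i hi)]
  | and φ ψ ih₁ ih₂ =>
      simp only [InterpInf]
      rw [ih₁ v v' (fun i hi => h i (by simp [Form.freeVars]; exact Or.inl hi)),
          ih₂ v v' (fun i hi => h i (by simp [Form.freeVars]; exact Or.inr hi))]
  | ex n φ ih =>
      simp only [InterpInf]
      constructor <;> rintro ⟨p, hp⟩ <;> refine ⟨p, ?_⟩
      · rw [← ih (Function.update v n p) (Function.update v' n p) ?_]; exact hp
        intro i hi
        by_cases hin : i = n
        · subst hin; simp
        · rw [Function.update_of_ne hin, Function.update_of_ne hin]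
          exact h i (by simp [Form.freeVars, hi, hin])
      · rw [ih (Function.update v n p) (Function.update v' n p) ?_]; exact hp
        intro i hi
        by_cases hin : i = n
        · subst hin; simp
        · rw [Function.update_of_ne hin, Function.update_of_ne hin]
          exact h i (by simp [Form.freeVars, hi, hin])

lemma modelsInf_iff {w : ℕ → A} {φ : Form A} (hs : IsSentence φ) (v : ℕ → ℕ) :
    ModelsInf w φ ↔ InterpInf w φ v := by
  constructor
  · exact fun h => h v
  · intro h v'
    rw [interpInf_congr w φ v' v (fun i hi => by rw [hs] at hi; simp at hi)]
    exact h

lemma interp_normv (w : ℕ → A) (φ : Form A) (σ : ℕ → ℕ) (d : ℕ) (v v' : ℕ → ℕ)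
    (hσ : ∀ i ∈ φ.freeVars, σ i < d) (hv : ∀ i ∈ φ.freeVars, v' (σ i) = v i) :
    InterpInf w (Form.normv σ d φ) v' ↔ InterpInf w φ v := by
  induction φ generalizing σ d v v' with
  | letter a i =>
      simp only [Form.normv, InterpInf, hv i (by simp [Form.freeVars])]
  | lt i j =>
      simp only [Form.normv, InterpInf, hv i (by simp [Form.freeVars]),
        hv j (by simp [Form.freeVars])]
  | not φ ih =>
      simp only [Form.normv, InterpInf]
      rw [ih σ d v v' hσ hv]
  | and φ ψ ih₁ ih₂ =>
      simp only [Form.normv, InterpInf]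
      rw [ih₁ σ d v v' (fun i hi => hσ i (by simp [Form.freeVars]; exact Or.inl hi))
            (fun i hi => hv i (by simp [Form.freeVars]; exact Or.inl hi)),
          ih₂ σ d v v' (fun i hi => hσ i (by simp [Form.freeVars]; exact Or.inr hi))
            (fun i hi => hv i (by simp [Form.freeVars]; exact Or.inr hi))]
  | ex n φ ih =>
      simp only [Form.normv, InterpInf]
      have hσ' : ∀ p : ℕ, ∀ i ∈ φ.freeVars, Function.update σ n d i < d + 1 := by
        intro p i hi
        by_cases hin : i = n
        · subst hin; simp
        · rw [Function.update_of_ne hin]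
          have := hσ i (by simp [Form.freeVars, hi, hin])
          omega
      have hv' : ∀ p : ℕ, ∀ i ∈ φ.freeVars,
          Function.update v' d p (Function.update σ n d i) = Function.update v n p i := by
        intro p i hi
        by_cases hin : i = n
        · subst hin; rw [Function.update_self, Function.update_self, Function.update_self]
        · rw [Function.update_of_ne hin, Function.update_of_ne hin]
          have hlt := hσ i (by simp [Form.freeVars, hi, hin])
          rw [Function.update_of_ne (by omega)]
          exact hv i (by simp [Form.freeVars, hi, hin])
      constructor <;> rintro ⟨p, hp⟩ <;> refine ⟨p, ?_⟩
      · exact (ih (Function.update σ n d) (d+1) (Function.update v n p)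
          (Function.update v' d p) (hσ' p) (hv' p)).mp hp
      · exact (ih (Function.update σ n d) (d+1) (Function.update v n p)
          (Function.update v' d p) (hσ' p) (hv' p)).mpr hp

lemma allVars_normv (φ : Form A) (σ : ℕ → ℕ) (d : ℕ) :
    (Form.normv σ d φ).allVars ⊆ φ.freeVars.image σ ∪ Finset.Ico d (d + φ.rank) := by
  induction φ generalizing σ d with
  | letter a i =>
      intro x hx
      simp only [Form.normv, Form.allVars, Finset.mem_singleton] at hx
      subst hx
      exact Finset.mem_union_left _ (Finset.mem_image_of_mem σ (by simp [Form.freeVars]))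
  | lt i j =>
      intro x hx
      simp only [Form.normv, Form.allVars, Finset.mem_insert, Finset.mem_singleton] at hx
      rcases hx with rfl | rfl
      · exact Finset.mem_union_left _ (Finset.mem_image_of_mem σ (by simp [Form.freeVars]))
      · exact Finset.mem_union_left _ (Finset.mem_image_of_mem σ (by simp [Form.freeVars]))
  | not φ ih => exact ih σ d
  | and φ ψ ih₁ ih₂ =>
      intro x hx
      simp only [Form.normv, Form.allVars, Finset.mem_union] at hx
      rcases hx with hx | hx
      · have := ih₁ σ d hx
        simp only [Finset.mem_union, Finset.mem_image, Finset.mem_Ico,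
          Form.freeVars, Form.rank] at this ⊢
        rcases this with ⟨i, hi, hx⟩ | h
        · exact Or.inl ⟨i, Or.inl hi, hx⟩
        · exact Or.inr (by omega)
      · have := ih₂ σ d hx
        simp only [Finset.mem_union, Finset.mem_image, Finset.mem_Ico,
          Form.freeVars, Form.rank] at this ⊢
        rcases this with ⟨i, hi, hx⟩ | h
        · exact Or.inl ⟨i, Or.inr hi, hx⟩
        · exact Or.inr (by omega)
  | ex n φ ih =>
      intro x hx
      simp only [Form.normv, Form.allVars, Finset.mem_insert] at hx
      simp only [Finset.mem_union, Finset.mem_image, Finset.mem_Ico,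
        Form.freeVars, Form.rank, Finset.mem_sdiff, Finset.mem_singleton]
      rcases hx with rfl | hx
      · exact Or.inr (by omega)
      · have := ih (Function.update σ n d) (d+1) hx
        simp only [Finset.mem_union, Finset.mem_image, Finset.mem_Ico] at this
        rcases this with ⟨i, hi, hx'⟩ | h
        · by_cases hin : i = n
          · subst hin
            rw [Function.update_self] at hx'
            exact Or.inr (by omega)
          · rw [Function.update_of_ne hin] at hx'
            exact Or.inl ⟨i, ⟨hi, hin⟩, hx'⟩
        · exact Or.inr (by omega)


/-- The finite type of rank-`r` "types" of ω-words with `k` parameters. -/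
def Ty (A : Type) (k : ℕ) : ℕ → Type
  | 0 => (A → Fin k → Prop) × (Fin k → Fin k → Prop)
  | r+1 => Ty A k r × (Fin k → Set (Ty A k r))

instance tyFinite (A : Type) [Fintype A] (k : ℕ) : ∀ r, Finite (Ty A k r)
  | 0 => by unfold Ty; infer_instance
  | r+1 => by have := tyFinite A k r; unfold Ty; infer_instance

/-- The rank-`r` type of an ω-word with an assignment. -/
def Cmap {A : Type} (k : ℕ) : (r : ℕ) → (ℕ → A) → (ℕ → ℕ) → Ty A k r
  | 0, w, v => (fun a i => w (v (i : ℕ)) = a, fun i j => v (i : ℕ) < v (j : ℕ))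
  | r+1, w, v => (Cmap k r w v,
      fun n => {t | ∃ x : ℕ, Cmap k r w (Function.update v (n : ℕ) x) = t})

lemma Cmap_zero_eq {A : Type} {k : ℕ} :
    ∀ (r : ℕ) (w w' : ℕ → A) (v v' : ℕ → ℕ),
      Cmap k r w v = Cmap k r w' v' → Cmap k 0 w v = Cmap k 0 w' v'
  | 0, _, _, _, _, h => h
  | r+1, w, w', v, v', h => Cmap_zero_eq r w w' v v' (congrArg Prod.fst h)

lemma interp_of_C_eq {A : Type} {k : ℕ} (φ : Form A)
    (hvars : φ.allVars ⊆ Finset.range k) :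
    ∀ (r : ℕ), φ.rank ≤ r → ∀ (w w' : ℕ → A) (v v' : ℕ → ℕ),
      Cmap k r w v = Cmap k r w' v' → (InterpInf w φ v ↔ InterpInf w' φ v') := by
  induction φ with
  | letter a i =>
      intro r _ w w' v v' h
      have h0 := Cmap_zero_eq r w w' v v' h
      have hik : i < k := Finset.mem_range.mp
        (hvars (show i ∈ (Form.letter a i).allVars by simp [Form.allVars]))
      have := congrFun (congrFun (congrArg Prod.fst h0) a) ⟨i, hik⟩
      simp only [Cmap] at this
      simp only [InterpInf]
      exact iff_of_eq this
  | lt i j =>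
      intro r _ w w' v v' h
      have h0 := Cmap_zero_eq r w w' v v' h
      have hik : i < k := Finset.mem_range.mp
        (hvars (show i ∈ (Form.lt i j).allVars by simp [Form.allVars]))
      have hjk : j < k := Finset.mem_range.mp
        (hvars (show j ∈ (Form.lt i j).allVars by simp [Form.allVars]))
      have := congrFun (congrFun (congrArg Prod.snd h0) ⟨i, hik⟩) ⟨j, hjk⟩
      simp only [Cmap] at this
      simp only [InterpInf]
      exact iff_of_eq this
  | not φ ih =>
      intro r hr w w' v v' h
      simp only [InterpInf]
      rw [ih (fun x hx => hvars hx) r hr w w' v v' h]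
  | and φ ψ ih₁ ih₂ =>
      intro r hr w w' v v' h
      simp only [Form.rank, max_le_iff] at hr
      simp only [InterpInf]
      rw [ih₁ (fun x hx => hvars (by simp [Form.allVars]; exact Or.inl hx)) r hr.1 w w' v v' h,
          ih₂ (fun x hx => hvars (by simp [Form.allVars]; exact Or.inr hx)) r hr.2 w w' v v' h]
  | ex n φ ih =>
      intro r hr w w' v v' h
      obtain ⟨r, rfl⟩ : ∃ r', r = r' + 1 := by
        have : 1 ≤ r := le_trans (by simp [Form.rank]) hr
        exact ⟨r - 1, by omega⟩
      have hrφ : φ.rank ≤ r := by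
        simp only [Form.rank] at hr; omega
      have hnk : n < k := Finset.mem_range.mp
        (hvars (show n ∈ (Form.ex n φ).allVars by simp [Form.allVars]))
      have hφvars : φ.allVars ⊆ Finset.range k := fun x hx =>
        hvars (by simp [Form.allVars]; exact Or.inr hx)
      have hsnd := congrFun (congrArg Prod.snd h) ⟨n, hnk⟩
      simp only [Cmap] at hsnd
      simp only [InterpInf]
      constructor
      · rintro ⟨p, hp⟩
        have hmem : Cmap k r w (Function.update v n p) ∈
            {t | ∃ x : ℕ, Cmap k r w (Function.update v n x) = t} := ⟨p, rfl⟩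
        rw [hsnd] at hmem
        obtain ⟨q, hq⟩ := hmem
        exact ⟨q, (ih hφvars r hrφ w w' (Function.update v n p)
          (Function.update v' n q) hq.symm).mp hp⟩
      · rintro ⟨p, hp⟩
        have hmem : Cmap k r w' (Function.update v' n p) ∈
            {t | ∃ x : ℕ, Cmap k r w' (Function.update v' n x) = t} := ⟨p, rfl⟩
        rw [← hsnd] at hmem
        obtain ⟨q, hq⟩ := hmem
        exact ⟨q, (ih hφvars r hrφ w w' (Function.update v n q)
          (Function.update v' n p) hq).mpr hp⟩

lemma equivK_of_C_eq {A : Type} {k : ℕ} (w w' : ℕ → A)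
    (h : Cmap k k w (fun _ => 0) = Cmap k k w' (fun _ => 0)) : EquivKInf k w w' := by
  intro φ hs hr
  have hfree : ∀ i ∈ φ.freeVars, False := by
    intro i hi; rw [hs] at hi; simp at hi
  set ψ := Form.normv id 0 φ with hψ
  have hinterp : ∀ u : ℕ → A, InterpInf u ψ (fun _ => 0) ↔ InterpInf u φ (fun _ => 0) :=
    fun u => interp_normv u φ id 0 (fun _ => 0) (fun _ => 0)
      (fun i hi => absurd (hfree i hi) not_false)
      (fun i hi => absurd (hfree i hi) not_false)
  have hvars : ψ.allVars ⊆ Finset.range k := by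
    intro x hx
    have := allVars_normv φ id 0 hx
    simp only [Finset.mem_union, Finset.mem_image, Finset.mem_Ico] at this
    rcases this with ⟨i, hi, _⟩ | hx'
    · exact absurd (hfree i hi) not_false
    · simp only [Finset.mem_range]
      omega
  have hrψ : ψ.rank ≤ k := by rw [hψ, rank_normv]; exact hr
  have := interp_of_C_eq ψ hvars k hrψ w w' (fun _ => 0) (fun _ => 0) h
  rw [modelsInf_iff hs (fun _ => 0), modelsInf_iff hs (fun _ => 0),
    ← hinterp w, ← hinterp w', this]
/-- A sentence defining the full ω-language. -/
def trueForm (A : Type) : Form A := Form.not (Form.ex 0 (Form.lt 0 0))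

lemma isSentence_trueForm : IsSentence (trueForm A) := by
  simp [IsSentence, trueForm, Form.freeVars]

lemma fodefinable_univ : FODefinableInf (Set.univ : Set (ℕ → A)) := by
  refine ⟨trueForm A, isSentence_trueForm, ?_⟩
  ext w
  simp only [Set.mem_univ, true_iff, LangOfInf, Set.mem_setOf_eq]
  intro v
  simp only [trueForm, InterpInf]
  rintro ⟨p, hp⟩
  simp at hp

lemma FODefinableInf.compl' {L : Set (ℕ → A)} (h : FODefinableInf L) :
    FODefinableInf Lᶜ := by
  obtain ⟨φ, hs, rfl⟩ := h
  refine ⟨Form.not φ, hs, ?_⟩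
  ext w
  simp only [Set.mem_compl_iff, LangOfInf, Set.mem_setOf_eq]
  rw [modelsInf_iff hs (fun _ => 0),
    modelsInf_iff (show IsSentence (Form.not φ) from hs) (fun _ => 0)]
  simp [InterpInf]

lemma FODefinableInf.inter' {L L' : Set (ℕ → A)} (h : FODefinableInf L)
    (h' : FODefinableInf L') : FODefinableInf (L ∩ L') := by
  obtain ⟨φ, hs, rfl⟩ := h
  obtain ⟨ψ, hs', rfl⟩ := h'
  refine ⟨Form.and φ ψ, by
    show (Form.and φ ψ).freeVars = ∅
    simp only [Form.freeVars]
    rw [show φ.freeVars = ∅ from hs, show ψ.freeVars = ∅ from hs']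
    simp, ?_⟩
  ext w
  simp only [Set.mem_inter_iff, LangOfInf, Set.mem_setOf_eq, ModelsInf, InterpInf,
    forall_and]

lemma fodefinable_cell (F' : Finset (Set (ℕ → A)))
    (h : ∀ L ∈ F', FODefinableInf L) (s : Finset (Set (ℕ → A))) :
    FODefinableInf (⋂ L ∈ F', (if L ∈ s then L else Lᶜ)) := by
  classical
  induction F' using Finset.induction_on with
  | empty => simpa using fodefinable_univ
  | @insert a F' ha ih =>
      rw [Finset.set_biInter_insert]
      refine FODefinableInf.inter' ?_ (ih (fun L hL => h L (Finset.mem_insert_of_mem hL)))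
      by_cases has : a ∈ s
      · simpa [has] using h a (Finset.mem_insert_self a F')
      · simpa [has] using (h a (Finset.mem_insert_self a F')).compl'

lemma exists_fopart_refining (A : Type) [Fintype A] (k : ℕ) :
    ∃ P : Set (Set (ℕ → A)), FOPartInf P ∧
      ∀ K ∈ P, ∀ w ∈ K, ∀ w' ∈ K, EquivKInf k w w' := by
  classical
  set g : (ℕ → A) → Ty A k k := fun w => Cmap k k w (fun _ => 0) with hg
  set M : Set (Set (ℕ → A)) :=
    {L | ∃ φ : Form A, IsSentence φ ∧ φ.rank ≤ k ∧ L = LangOfInf φ} with hM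
  have hMfin : M.Finite := by
    apply Set.Finite.subset (Set.finite_range (fun S : Set (Ty A k k) => g ⁻¹' S))
    rintro L ⟨φ, hs, hr, rfl⟩
    refine ⟨g '' LangOfInf φ, ?_⟩
    ext w
    simp only [Set.mem_preimage, Set.mem_image]
    constructor
    · rintro ⟨w', hw', hgw⟩
      exact ((equivK_of_C_eq w' w hgw) φ hs hr).mp hw'
    · intro hw
      exact ⟨w, hw, rfl⟩
  set F : Finset (Set (ℕ → A)) := hMfin.toFinset with hF
  have hFfo : ∀ L ∈ F, FODefinableInf L := by
    intro L hL
    rw [hF, Set.Finite.mem_toFinset] at hL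
    obtain ⟨φ, hs, _, rfl⟩ := hL
    exact ⟨φ, hs, rfl⟩
  set cell : Finset (Set (ℕ → A)) → Set (ℕ → A) :=
    fun s => ⋂ L ∈ F, (if L ∈ s then L else Lᶜ) with hcell
  have hmem_cell : ∀ (s : Finset (Set (ℕ → A))) (w : ℕ → A),
      w ∈ cell s ↔ ∀ L ∈ F, (L ∈ s → w ∈ L) ∧ (L ∉ s → w ∉ L) := by
    intro s w
    rw [hcell]
    simp only [Set.mem_iInter]
    constructor
    · intro h L hL
      have := h L hL
      constructor
      · intro hLs; rwa [if_pos hLs] at this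
      · intro hLs; rw [if_neg hLs] at this; exact this
    · intro h L hL
      by_cases hLs : L ∈ s
      · rw [if_pos hLs]; exact (h L hL).1 hLs
      · rw [if_neg hLs]; exact (h L hL).2 hLs
  refine ⟨cell '' {s : Finset (Set (ℕ → A)) | s ⊆ F}, ⟨⟨?_, ?_⟩, ?_⟩, ?_⟩
  · -- finiteness
    apply Set.Finite.image
    have : {s : Finset (Set (ℕ → A)) | s ⊆ F} = ↑F.powerset := by
      ext s; simp
    rw [this]
    exact F.powerset.finite_toSet
  · -- partition
    intro w
    refine ⟨cell (F.filter (fun L => w ∈ L)), ⟨⟨F.filter (fun L => w ∈ L),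
      fun L hL => (Finset.mem_filter.mp hL).1, rfl⟩, ?_⟩, ?_⟩
    · rw [hmem_cell]
      intro L hL
      constructor
      · intro hLs; exact (Finset.mem_filter.mp hLs).2
      · intro hLs hw; exact hLs (Finset.mem_filter.mpr ⟨hL, hw⟩)
    · rintro B ⟨⟨s, hsF, rfl⟩, hwB⟩
      have hs : s = F.filter (fun L => w ∈ L) := by
        ext L
        rw [Finset.mem_filter]
        constructor
        · intro hLs
          have hLF := hsF hLs
          exact ⟨hLF, ((hmem_cell s w).mp hwB L hLF).1 hLs⟩
        · rintro ⟨hLF, hwL⟩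
          by_contra hLs
          exact ((hmem_cell s w).mp hwB L hLF).2 hLs hwL
      rw [hs]
  · -- FO-definability
    rintro B ⟨s, _, rfl⟩
    exact fodefinable_cell F hFfo s
  · -- refinement
    rintro K ⟨s, _, rfl⟩ w hw w' hw'
    intro φ hs hr
    have hL : LangOfInf φ ∈ F := by
      rw [hF, Set.Finite.mem_toFinset]
      exact ⟨φ, hs, hr, rfl⟩
    have h1 := (hmem_cell s w).mp hw (LangOfInf φ) hL
    have h2 := (hmem_cell s w').mp hw' (LangOfInf φ) hL
    by_cases hLs : LangOfInf φ ∈ s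
    · simp only [LangOfInf, Set.mem_setOf_eq] at h1 h2
      exact iff_of_true (h1.1 hLs) (h2.1 hLs)
    · simp only [LangOfInf, Set.mem_setOf_eq] at h1 h2
      exact iff_of_false (h1.2 hLs) (h2.2 hLs)
end Stmt18Aux
theorem stmt18 {A Sinf : Type} [Fintype A] [Fintype Sinf]
    (α : (ℕ → A) → Sinf) (T : Set Sinf) :
    T ∈ optImprintFOInf α ↔
      ∀ k : ℕ, ∃ w : ℕ → A, T ⊆ α '' { w' | EquivKInf k w w' } := by
  classical
  constructor
  · intro hT k
    by_cases hA : Nonempty (ℕ → A)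
    · obtain ⟨P, hP, href⟩ := exists_fopart_refining A k
      obtain ⟨K, hK, hTK⟩ := hT P hP
      by_cases hKne : K.Nonempty
      · obtain ⟨w, hw⟩ := hKne
        refine ⟨w, hTK.trans (Set.image_mono ?_)⟩
        intro w' hw'
        exact href K hK w hw w' hw'
      · obtain ⟨w⟩ := hA
        refine ⟨w, ?_⟩
        rw [Set.not_nonempty_iff_eq_empty.mp hKne] at hTK
        simp only [Set.image_empty, Set.subset_empty_iff] at hTK
        rw [hTK]
        exact Set.empty_subset _
    · exfalso
      have hpart : FOPartInf (∅ : Set (Set (ℕ → A))) := by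
        refine ⟨⟨Set.finite_empty, fun x => absurd ⟨x⟩ hA⟩, by simp⟩
      obtain ⟨K, hK, _⟩ := hT ∅ hpart
      simp at hK
  · intro h P hP
    have hPfin : P.Finite := hP.1.1
    set Φ : Set (ℕ → A) → Form A :=
      fun B => if hB : FODefinableInf B then Classical.choose hB else trueForm A with hΦ
    set k : ℕ := hPfin.toFinset.sup (fun B => (Φ B).rank) with hk
    obtain ⟨w, hw⟩ := h k
    obtain ⟨B, ⟨hBP, hwB⟩, _⟩ := hP.1.2 w
    have hB : FODefinableInf B := hP.2 B hBP
    have hΦB : Φ B = Classical.choose hB := by rw [hΦ]; simp [hB]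
    obtain ⟨hsent, hlang⟩ := Classical.choose_spec hB
    rw [← hΦB] at hsent hlang
    have hrank : (Φ B).rank ≤ k := by
      rw [hk]
      exact Finset.le_sup (f := fun B => (Φ B).rank) ((Set.Finite.mem_toFinset hPfin).mpr hBP)
    refine ⟨B, hBP, hw.trans (Set.image_mono ?_)⟩
    intro w' hw'
    have : ModelsInf w (Φ B) := by
      rw [hlang] at hwB
      exact hwB
    rw [hlang]
    exact (hw' (Φ B) hsent hrank).mp this
end FOSep
end
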